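/- arXiv:2401.14395 — 4 statements merged into one kernel-verified Lean document; each statement's English description precedes it below -/
import Mathlib

section
/- Let (Ω,𝓕,P) be a probability space and let Z : Ω → ℝ^m, X : Ω → ℝ^k, ε : Ω → ℝ and η : Ω → ℝ be random variables. Let q : ℝ^m × ℝ^k × ℝ → ℝ be measurable and set D = q(Z,X,η). If Z is conditionally independent of the pair (ε,η) given X (the precise form of the instrument exogeneity used in the proof; the paper's Assumption 3 states Z independent of (ε,η)), then D is conditionally independent of ε given (η,X): for all bounded measurable a : ℝ → ℝ and b : ℝ → ℝ, E[a(D) b(ε) | σ(η,X)] = E[a(D) | σ(η,X)] · E[b(ε) | σ(η,X)] P-almost surely. -/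
open MeasureTheory ProbabilityTheory

section TCITE_Aux

variable {Ω : Type*} {mΩ : MeasurableSpace Ω} {P : Measure Ω}

lemma TCITE_abs_indicator_one_le {α : Type*} (s : Set α) (x : α) :
    |s.indicator (fun _ => (1 : ℝ)) x| ≤ 1 := by
  by_cases h : x ∈ s <;> simp [h]

lemma TCITE_abs_mul_le {x y cx cy : ℝ} (hx : |x| ≤ cx) (hy : |y| ≤ cy) :
    |x * y| ≤ cx * cy := by
  rw [abs_mul]
  exact mul_le_mul hx hy (abs_nonneg _) (le_trans (abs_nonneg _) hx)

lemma TCITE_integrable_of_bdd [IsFiniteMeasure P] {f : Ω → ℝ}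
    (hf : AEStronglyMeasurable f P) {C : ℝ} (hC : ∀ ω, |f ω| ≤ C) :
    Integrable f P :=
  ⟨hf, HasFiniteIntegral.of_bounded (C := C) (Filter.Eventually.of_forall fun ω => by
    simpa [Real.norm_eq_abs] using hC ω)⟩

lemma TCITE_integrable_bdd_mul {k g : Ω → ℝ} (hg : Integrable g P)
    (hk : AEStronglyMeasurable k P) {C : ℝ} (hC : ∀ ω, |k ω| ≤ C) :
    Integrable (fun ω => k ω * g ω) P :=
  hg.bdd_mul hk (c := C) (Filter.Eventually.of_forall fun ω => by simpa [Real.norm_eq_abs] using hC ω)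

/-- `∫ k·g = ∫ k·E[g|m]` for `m`-strongly measurable `k`. -/
lemma TCITE_integral_mul_condexp {m : MeasurableSpace Ω} (hm : m ≤ mΩ)
    [SigmaFinite (P.trim hm)] {k g : Ω → ℝ}
    (hk : StronglyMeasurable[m] k)
    (hkg : Integrable (fun ω => k ω * g ω) P) (hg : Integrable g P) :
    ∫ ω, k ω * g ω ∂P = ∫ ω, k ω * (P[g|m]) ω ∂P := by
  have h2 : P[fun ω => k ω * g ω|m] =ᵐ[P] fun ω => k ω * (P[g|m]) ω := by
    have := condExp_mul_of_stronglyMeasurable_left (μ := P) hk (by exact hkg) hg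
    filter_upwards [this] with ω hω
    exact hω
  calc ∫ ω, k ω * g ω ∂P
      = ∫ ω, (P[fun ω => k ω * g ω|m]) ω ∂P := (integral_condExp hm).symm
    _ = ∫ ω, k ω * (P[g|m]) ω ∂P := integral_congr_ae h2

/-- If two integrable functions have equal integrals over preimages of all measurable
rectangles, they have equal integrals over preimages of all measurable sets. -/
lemma TCITE_setIntegral_eq_of_rect {α β : Type*} [MeasurableSpace α] [MeasurableSpace β]
    {V : Ω → α × β} (hV : Measurable V) {u v : Ω → ℝ}
    (hu : Integrable u P) (hv : Integrable v P)
    (h : ∀ A B, MeasurableSet A → MeasurableSet B →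
      ∫ ω in V ⁻¹' (A ×ˢ B), u ω ∂P = ∫ ω in V ⁻¹' (A ×ˢ B), v ω ∂P)
    {E : Set (α × β)} (hE : MeasurableSet E) :
    ∫ ω in V ⁻¹' E, u ω ∂P = ∫ ω in V ⁻¹' E, v ω ∂P := by
  refine MeasurableSpace.induction_on_inter
    (C := fun E _ => ∫ ω in V ⁻¹' E, u ω ∂P = ∫ ω in V ⁻¹' E, v ω ∂P)
    generateFrom_prod.symm isPiSystem_prod ?_ ?_ ?_ ?_ E hE
  · simp
  · rintro t ⟨A, hA, B, hB, rfl⟩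
    exact h A B hA hB
  · intro t ht hrec
    have htm : MeasurableSet (V ⁻¹' t) := hV ht
    have h0 := h Set.univ Set.univ MeasurableSet.univ MeasurableSet.univ
    rw [Set.univ_prod_univ, Set.preimage_univ, Measure.restrict_univ] at h0
    have hu' := integral_add_compl htm hu
    have hv' := integral_add_compl htm hv
    rw [Set.preimage_compl]
    linarith
  · intro f hdisj hmeas hrec
    rw [Set.preimage_iUnion,
      integral_iUnion (fun i => hV (hmeas i))
        (fun i j hij => Set.disjoint_iff_inter_eq_empty.mpr (by
          have := Set.disjoint_iff_inter_eq_empty.mp (hdisj hij)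
          rw [← Set.preimage_inter, this, Set.preimage_empty])) hu.integrableOn,
      integral_iUnion (fun i => hV (hmeas i))
        (fun i j hij => Set.disjoint_iff_inter_eq_empty.mpr (by
          have := Set.disjoint_iff_inter_eq_empty.mp (hdisj hij)
          rw [← Set.preimage_inter, this, Set.preimage_empty])) hv.integrableOn]
    exact tsum_congr hrec

lemma TCITE_setIntegral_preimage_pair {α β : Type*} [MeasurableSpace α] [MeasurableSpace β]
    {V1 : Ω → α} {V2 : Ω → β} (hV1 : Measurable V1) (hV2 : Measurable V2)
    {A : Set α} {E : Set β} (hA : MeasurableSet A) (hE : MeasurableSet E) (g : Ω → ℝ) :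
    ∫ ω in (fun ω => (V1 ω, V2 ω)) ⁻¹' (A ×ˢ E), g ω ∂P
      = ∫ ω in V2 ⁻¹' E, A.indicator (fun _ => (1 : ℝ)) (V1 ω) * g ω ∂P := by
  rw [← integral_indicator (hV2 hE), ← integral_indicator ((hV1.prodMk hV2) (hA.prod hE))]
  refine integral_congr_ae (Filter.Eventually.of_forall fun ω => ?_)
  by_cases h1 : V1 ω ∈ A <;> by_cases h2 : V2 ω ∈ E <;>
    simp [Set.indicator_apply, h1, h2]

lemma TCITE_setIntegral_preimage {γ' : Type*} [MeasurableSpace γ'] {V : Ω → γ'}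
    (hV : Measurable V) {C : Set γ'} (hC : MeasurableSet C) (g : Ω → ℝ) :
    ∫ ω in V ⁻¹' C, g ω ∂P = ∫ ω, C.indicator (fun _ => (1 : ℝ)) (V ω) * g ω ∂P := by
  rw [← integral_indicator (hV hC)]
  refine integral_congr_ae (Filter.Eventually.of_forall fun ω => ?_)
  by_cases h : V ω ∈ C <;> simp [Set.indicator_apply, h]

lemma TCITE_setIntegral_eq_indicator_mul {s : Set Ω} (hs : MeasurableSet s) (g : Ω → ℝ) :
    ∫ ω in s, g ω ∂P = ∫ ω, s.indicator (fun _ => (1 : ℝ)) ω * g ω ∂P := by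
  rw [← integral_indicator hs]
  refine integral_congr_ae (Filter.Eventually.of_forall fun ω => ?_)
  by_cases h : ω ∈ s <;> simp [h]

end TCITE_Aux

section TCITE_Main

/-- The σ-algebra generated by a map. -/
def TCITE_comap {Ω γ : Type*} [MeasurableSpace γ] (X : Ω → γ) : MeasurableSpace Ω :=
  MeasurableSpace.comap X inferInstance

/-- Generic version of Theorem 2(i). -/
theorem TCITE_main
    {Ω : Type*} {mΩ : MeasurableSpace Ω} (P : Measure Ω) [IsProbabilityMeasure P]
    {α β γ δ : Type*} [MeasurableSpace α] [MeasurableSpace β] [MeasurableSpace γ]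
    [MeasurableSpace δ]
    (Z : Ω → α) (η : Ω → β) (X : Ω → γ) (ε : Ω → δ)
    (hZ : Measurable Z) (hη : Measurable η) (hX : Measurable X) (hε : Measurable ε)
    (hexog : ∀ (f : α → ℝ) (g : δ × β → ℝ), Measurable f → Measurable g →
      (∃ C, ∀ x, |f x| ≤ C) → (∃ C, ∀ x, |g x| ≤ C) →
      P[fun ω => f (Z ω) * g (ε ω, η ω)|(TCITE_comap X)] =ᵐ[P]
        fun ω => (P[fun ω' => f (Z ω')|(TCITE_comap X)]) ω * (P[fun ω' => g (ε ω', η ω')|(TCITE_comap X)]) ω)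
    (aD : Ω → ℝ) (haDm : Measurable[mΩ] aD) (haDT : StronglyMeasurable[(TCITE_comap (fun ω => (Z ω, (η ω, X ω))))] aD)
    (Ca : ℝ) (hCa : ∀ ω, |aD ω| ≤ Ca)
    (b : δ → ℝ) (hb : Measurable b) (Cb : ℝ) (hCb : ∀ x, |b x| ≤ Cb) :
    P[fun ω => aD ω * b (ε ω)|(TCITE_comap (fun ω => (η ω, X ω)))] =ᵐ[P]
      fun ω => (P[aD|(TCITE_comap (fun ω => (η ω, X ω)))]) ω * (P[fun ω' => b (ε ω')|(TCITE_comap (fun ω => (η ω, X ω)))]) ω := by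
  have hWX : Measurable[mΩ] fun ω => (η ω, X ω) := hη.prodMk hX
  have hWT : Measurable[mΩ] fun ω => (Z ω, (η ω, X ω)) := hZ.prodMk hWX
  have hmXle : (TCITE_comap X) ≤ mΩ := hX.comap_le
  have hmGle : (TCITE_comap (fun ω => (η ω, X ω))) ≤ mΩ := hWX.comap_le
  have hmTle : (TCITE_comap (fun ω => (Z ω, (η ω, X ω)))) ≤ mΩ := hWT.comap_le
  haveI : SigmaFinite (P.trim hmXle) := inferInstance
  haveI : SigmaFinite (P.trim hmGle) := inferInstance
  haveI : SigmaFinite (P.trim hmTle) := inferInstance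
  have hXG : (TCITE_comap X) ≤ (TCITE_comap (fun ω => (η ω, X ω))) := by
    show MeasurableSpace.comap X inferInstance ≤
      MeasurableSpace.comap (fun ω => (η ω, X ω)) inferInstance
    calc MeasurableSpace.comap X inferInstance
        = MeasurableSpace.comap (fun ω => (η ω, X ω))
            (MeasurableSpace.comap Prod.snd inferInstance) :=
          (MeasurableSpace.comap_comp (f := Prod.snd)
            (g := fun ω => (η ω, X ω))).symm
      _ ≤ _ := MeasurableSpace.comap_mono measurable_snd.comap_le
  have hGT : (TCITE_comap (fun ω => (η ω, X ω))) ≤ (TCITE_comap (fun ω => (Z ω, (η ω, X ω)))) := by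
    show MeasurableSpace.comap (fun ω => (η ω, X ω)) inferInstance ≤
      MeasurableSpace.comap (fun ω => (Z ω, (η ω, X ω))) inferInstance
    calc MeasurableSpace.comap (fun ω => (η ω, X ω)) inferInstance
        = MeasurableSpace.comap (fun ω => (Z ω, (η ω, X ω)))
            (MeasurableSpace.comap Prod.snd inferInstance) :=
          (MeasurableSpace.comap_comp (f := Prod.snd)
            (g := fun ω => (Z ω, (η ω, X ω)))).symm
      _ ≤ _ := MeasurableSpace.comap_mono measurable_snd.comap_le
  have hXmX : Measurable[(TCITE_comap X)] X := Measurable.of_comap_le le_rfl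
  have hW2G : Measurable[(TCITE_comap (fun ω => (η ω, X ω)))] (fun ω => (η ω, X ω)) :=
    Measurable.of_comap_le le_rfl
  have hηG : Measurable[(TCITE_comap (fun ω => (η ω, X ω)))] η := by exact measurable_fst.comp hW2G
  have hXmG : Measurable[(TCITE_comap (fun ω => (η ω, X ω)))] X := by exact measurable_snd.comp hW2G
  -- basic integrability
  have hbεm : Measurable[mΩ] fun ω => b (ε ω) := hb.comp hε
  have haDi : Integrable aD P := TCITE_integrable_of_bdd haDm.aestronglyMeasurable hCa
  have hbεi : Integrable (fun ω => b (ε ω)) P :=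
    TCITE_integrable_of_bdd hbεm.aestronglyMeasurable (fun ω => hCb _)
  -- Step 1 : E[1_A(Z) | σ(X)] = E[1_A(Z) | σ(η,X)]
  have step1 : ∀ A : Set α, MeasurableSet A →
      P[fun ω => A.indicator (fun _ => (1 : ℝ)) (Z ω)|(TCITE_comap X)] =ᵐ[P]
        P[fun ω => A.indicator (fun _ => (1 : ℝ)) (Z ω)|(TCITE_comap (fun ω => (η ω, X ω)))] := by
    intro A hA
    have hIAm : Measurable[mΩ] fun ω => A.indicator (fun _ => (1 : ℝ)) (Z ω) :=
      (measurable_const.indicator hA).comp hZ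
    have hIAi : Integrable (fun ω => A.indicator (fun _ => (1 : ℝ)) (Z ω)) P :=
      TCITE_integrable_of_bdd hIAm.aestronglyMeasurable fun ω => TCITE_abs_indicator_one_le _ _
    refine ae_eq_condExp_of_forall_setIntegral_eq hmGle hIAi
      (fun s _ _ => (integrable_condExp (μ := P)).integrableOn) ?_
      (stronglyMeasurable_condExp.mono hXG).aestronglyMeasurable
    intro s hs _
    obtain ⟨E, hE, rfl⟩ := hs
    refine TCITE_setIntegral_eq_of_rect hWX integrable_condExp hIAi ?_ hE
    intro B C hB hC
    rw [TCITE_setIntegral_preimage_pair hη hX hB hC,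
      TCITE_setIntegral_preimage_pair hη hX hB hC,
      TCITE_setIntegral_preimage hX hC, TCITE_setIntegral_preimage hX hC]
    -- now both sides are integrals over Ω
    have key := hexog (A.indicator fun _ => (1 : ℝ))
      (fun p => B.indicator (fun _ => (1 : ℝ)) p.2)
      (measurable_const.indicator hA) ((measurable_const.indicator hB).comp measurable_snd)
      ⟨1, fun x => TCITE_abs_indicator_one_le _ _⟩
      ⟨1, fun p => TCITE_abs_indicator_one_le _ _⟩
    have key' : P[fun ω => A.indicator (fun _ => (1 : ℝ)) (Z ω) *
          B.indicator (fun _ => (1 : ℝ)) (η ω)|(TCITE_comap X)] =ᵐ[P]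
        fun ω => (P[fun ω' => A.indicator (fun _ => (1 : ℝ)) (Z ω')|(TCITE_comap X)]) ω *
          (P[fun ω' => B.indicator (fun _ => (1 : ℝ)) (η ω')|(TCITE_comap X)]) ω := key
    have hICsm : StronglyMeasurable[(TCITE_comap X)] fun ω => C.indicator (fun _ => (1 : ℝ)) (X ω) := by
      exact ((measurable_const.indicator hC).comp hXmX).stronglyMeasurable
    have hIBm : Measurable[mΩ] fun ω => B.indicator (fun _ => (1 : ℝ)) (η ω) :=
      (measurable_const.indicator hB).comp hη
    have hIBi : Integrable (fun ω => B.indicator (fun _ => (1 : ℝ)) (η ω)) P :=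
      TCITE_integrable_of_bdd hIBm.aestronglyMeasurable fun ω => TCITE_abs_indicator_one_le _ _
    have hIAIBi : Integrable (fun ω => A.indicator (fun _ => (1 : ℝ)) (Z ω) *
        B.indicator (fun _ => (1 : ℝ)) (η ω)) P :=
      TCITE_integrable_bdd_mul hIBi hIAm.aestronglyMeasurable
        fun ω => TCITE_abs_indicator_one_le _ _
    calc ∫ ω, C.indicator (fun _ => (1 : ℝ)) (X ω) *
            (B.indicator (fun _ => (1 : ℝ)) (η ω) *
              (P[fun ω' => A.indicator (fun _ => (1 : ℝ)) (Z ω')|(TCITE_comap X)]) ω) ∂P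
        = ∫ ω, (fun ω' => C.indicator (fun _ => (1 : ℝ)) (X ω') *
              (P[fun ω'' => A.indicator (fun _ => (1 : ℝ)) (Z ω'')|(TCITE_comap X)]) ω') ω *
            B.indicator (fun _ => (1 : ℝ)) (η ω) ∂P :=
          integral_congr_ae (Filter.Eventually.of_forall fun ω => by ring)
      _ = ∫ ω, (fun ω' => C.indicator (fun _ => (1 : ℝ)) (X ω') *
              (P[fun ω'' => A.indicator (fun _ => (1 : ℝ)) (Z ω'')|(TCITE_comap X)]) ω') ω *
            (P[fun ω' => B.indicator (fun _ => (1 : ℝ)) (η ω')|(TCITE_comap X)]) ω ∂P := by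
          refine TCITE_integral_mul_condexp hmXle (hICsm.mul stronglyMeasurable_condExp) ?_ hIBi
          refine Integrable.congr (TCITE_integrable_bdd_mul
            (k := fun ω => C.indicator (fun _ => (1 : ℝ)) (X ω) *
              B.indicator (fun _ => (1 : ℝ)) (η ω)) integrable_condExp
            ((((measurable_const.indicator hC).comp hX).mul hIBm)).aestronglyMeasurable
            (C := 1) (fun ω => by
              simpa using TCITE_abs_mul_le (TCITE_abs_indicator_one_le C (X ω))
                (TCITE_abs_indicator_one_le B (η ω))))
            (Filter.Eventually.of_forall fun ω => by ring)
      _ = ∫ ω, C.indicator (fun _ => (1 : ℝ)) (X ω) *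
            ((P[fun ω' => A.indicator (fun _ => (1 : ℝ)) (Z ω')|(TCITE_comap X)]) ω *
              (P[fun ω' => B.indicator (fun _ => (1 : ℝ)) (η ω')|(TCITE_comap X)]) ω) ∂P :=
          integral_congr_ae (Filter.Eventually.of_forall fun ω => by ring)
      _ = ∫ ω, C.indicator (fun _ => (1 : ℝ)) (X ω) *
            (P[fun ω' => A.indicator (fun _ => (1 : ℝ)) (Z ω') *
              B.indicator (fun _ => (1 : ℝ)) (η ω')|(TCITE_comap X)]) ω ∂P := by
          refine integral_congr_ae ?_
          filter_upwards [key'] with ω hω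
          rw [hω]
      _ = ∫ ω, C.indicator (fun _ => (1 : ℝ)) (X ω) *
            (A.indicator (fun _ => (1 : ℝ)) (Z ω) *
              B.indicator (fun _ => (1 : ℝ)) (η ω)) ∂P :=
          (TCITE_integral_mul_condexp hmXle hICsm
            (TCITE_integrable_bdd_mul
              (k := fun ω => C.indicator (fun _ => (1 : ℝ)) (X ω)) hIAIBi
              (((measurable_const.indicator hC).comp hX)).aestronglyMeasurable
              (C := 1) (fun ω => TCITE_abs_indicator_one_le _ _)) hIAIBi).symm
      _ = ∫ ω, C.indicator (fun _ => (1 : ℝ)) (X ω) *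
            (B.indicator (fun _ => (1 : ℝ)) (η ω) *
              A.indicator (fun _ => (1 : ℝ)) (Z ω)) ∂P :=
          integral_congr_ae (Filter.Eventually.of_forall fun ω => by ring)
  -- Step 2 : E[b(ε) | σ(η,X)] = E[b(ε) | σ(Z,η,X)]
  have step2 : P[fun ω => b (ε ω)|(TCITE_comap (fun ω => (η ω, X ω)))] =ᵐ[P]
      P[fun ω => b (ε ω)|(TCITE_comap (fun ω => (Z ω, (η ω, X ω))))] := by
    refine ae_eq_condExp_of_forall_setIntegral_eq hmTle hbεi
      (fun s _ _ => (integrable_condExp (μ := P)).integrableOn) ?_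
      (stronglyMeasurable_condExp.mono hGT).aestronglyMeasurable
    intro s hs _
    obtain ⟨F, hF, rfl⟩ := hs
    refine TCITE_setIntegral_eq_of_rect hWT integrable_condExp hbεi ?_ hF
    intro A E hA hE
    rw [TCITE_setIntegral_preimage_pair hZ hWX hA hE,
      TCITE_setIntegral_preimage_pair hZ hWX hA hE]
    have hIAm : Measurable[mΩ] fun ω => A.indicator (fun _ => (1 : ℝ)) (Z ω) :=
      (measurable_const.indicator hA).comp hZ
    have hIAi : Integrable (fun ω => A.indicator (fun _ => (1 : ℝ)) (Z ω)) P :=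
      TCITE_integrable_of_bdd hIAm.aestronglyMeasurable fun ω => TCITE_abs_indicator_one_le _ _
    refine TCITE_setIntegral_eq_of_rect hWX
      (TCITE_integrable_bdd_mul (k := fun ω => A.indicator (fun _ => (1 : ℝ)) (Z ω))
        integrable_condExp hIAm.aestronglyMeasurable
        (C := 1) (fun ω => TCITE_abs_indicator_one_le _ _))
      (TCITE_integrable_bdd_mul (k := fun ω => A.indicator (fun _ => (1 : ℝ)) (Z ω))
        hbεi hIAm.aestronglyMeasurable
        (C := 1) (fun ω => TCITE_abs_indicator_one_le _ _)) ?_ hE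
    intro B C hB hC
    rw [TCITE_setIntegral_preimage_pair hη hX hB hC,
      TCITE_setIntegral_preimage_pair hη hX hB hC,
      TCITE_setIntegral_preimage hX hC, TCITE_setIntegral_preimage hX hC]
    have hIBm : Measurable[mΩ] fun ω => B.indicator (fun _ => (1 : ℝ)) (η ω) :=
      (measurable_const.indicator hB).comp hη
    have hICm : Measurable[mΩ] fun ω => C.indicator (fun _ => (1 : ℝ)) (X ω) :=
      (measurable_const.indicator hC).comp hX
    have hIBsmG : StronglyMeasurable[(TCITE_comap (fun ω => (η ω, X ω)))]
        (fun ω => B.indicator (fun _ => (1 : ℝ)) (η ω)) :=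
      ((measurable_const.indicator hB).comp hηG).stronglyMeasurable
    have hICsmG : StronglyMeasurable[(TCITE_comap (fun ω => (η ω, X ω)))]
        (fun ω => C.indicator (fun _ => (1 : ℝ)) (X ω)) :=
      ((measurable_const.indicator hC).comp hXmG).stronglyMeasurable
    have hICsmX : StronglyMeasurable[(TCITE_comap X)]
        (fun ω => C.indicator (fun _ => (1 : ℝ)) (X ω)) :=
      ((measurable_const.indicator hC).comp hXmX).stronglyMeasurable
    have hbIBi : Integrable (fun ω => b (ε ω) * B.indicator (fun _ => (1 : ℝ)) (η ω)) P :=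
      TCITE_integrable_of_bdd ((hbεm.mul hIBm)).aestronglyMeasurable
        (C := Cb * 1) fun ω => TCITE_abs_mul_le (hCb _) (TCITE_abs_indicator_one_le _ _)
    have hIAbIBi : Integrable
        (fun ω => A.indicator (fun _ => (1 : ℝ)) (Z ω) *
          (b (ε ω) * B.indicator (fun _ => (1 : ℝ)) (η ω))) P :=
      TCITE_integrable_bdd_mul (k := fun ω => A.indicator (fun _ => (1 : ℝ)) (Z ω))
        hbIBi hIAm.aestronglyMeasurable (C := 1) fun ω => TCITE_abs_indicator_one_le _ _
    have key2 := hexog (A.indicator fun _ => (1 : ℝ))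
      (fun p => b p.1 * B.indicator (fun _ => (1 : ℝ)) p.2)
      (measurable_const.indicator hA)
      ((hb.comp measurable_fst).mul ((measurable_const.indicator hB).comp measurable_snd))
      ⟨1, fun x => TCITE_abs_indicator_one_le _ _⟩
      ⟨Cb * 1, fun p => TCITE_abs_mul_le (hCb p.1) (TCITE_abs_indicator_one_le B p.2)⟩
    have key2' : P[fun ω => A.indicator (fun _ => (1 : ℝ)) (Z ω) *
          (b (ε ω) * B.indicator (fun _ => (1 : ℝ)) (η ω))|(TCITE_comap X)] =ᵐ[P]
        fun ω => (P[fun ω' => A.indicator (fun _ => (1 : ℝ)) (Z ω')|(TCITE_comap X)]) ω *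
          (P[fun ω' => b (ε ω') * B.indicator (fun _ => (1 : ℝ)) (η ω')|(TCITE_comap X)]) ω :=
      key2
    calc ∫ ω, C.indicator (fun _ => (1 : ℝ)) (X ω) *
            (B.indicator (fun _ => (1 : ℝ)) (η ω) *
              (A.indicator (fun _ => (1 : ℝ)) (Z ω) *
                (P[fun ω => b (ε ω)|(TCITE_comap (fun ω => (η ω, X ω)))]) ω)) ∂P
        = ∫ ω, (B.indicator (fun _ => (1 : ℝ)) (η ω) * C.indicator (fun _ => (1 : ℝ)) (X ω) *
              (P[fun ω => b (ε ω)|(TCITE_comap (fun ω => (η ω, X ω)))]) ω) *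
            A.indicator (fun _ => (1 : ℝ)) (Z ω) ∂P :=
          integral_congr_ae (Filter.Eventually.of_forall fun ω => by ring)
      _ = ∫ ω, (B.indicator (fun _ => (1 : ℝ)) (η ω) * C.indicator (fun _ => (1 : ℝ)) (X ω) *
              (P[fun ω => b (ε ω)|(TCITE_comap (fun ω => (η ω, X ω)))]) ω) *
            (P[fun ω' => A.indicator (fun _ => (1 : ℝ)) (Z ω')|(TCITE_comap (fun ω => (η ω, X ω)))]) ω ∂P := by
          refine TCITE_integral_mul_condexp hmGle
            (k := fun ω => B.indicator (fun _ => (1 : ℝ)) (η ω) *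
              C.indicator (fun _ => (1 : ℝ)) (X ω) *
              (P[fun ω => b (ε ω)|(TCITE_comap (fun ω => (η ω, X ω)))]) ω)
            ((hIBsmG.mul hICsmG).mul stronglyMeasurable_condExp) ?_ hIAi
          refine Integrable.congr (TCITE_integrable_bdd_mul
            (k := fun ω => B.indicator (fun _ => (1 : ℝ)) (η ω) *
              C.indicator (fun _ => (1 : ℝ)) (X ω) * A.indicator (fun _ => (1 : ℝ)) (Z ω))
            integrable_condExp ((hIBm.mul hICm).mul hIAm).aestronglyMeasurable
            (C := 1 * 1 * 1) (fun ω => TCITE_abs_mul_le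
              (TCITE_abs_mul_le (TCITE_abs_indicator_one_le _ _) (TCITE_abs_indicator_one_le _ _))
              (TCITE_abs_indicator_one_le _ _)))
            (Filter.Eventually.of_forall fun ω => by ring)
      _ = ∫ ω, (B.indicator (fun _ => (1 : ℝ)) (η ω) * C.indicator (fun _ => (1 : ℝ)) (X ω) *
              (P[fun ω => b (ε ω)|(TCITE_comap (fun ω => (η ω, X ω)))]) ω) *
            (P[fun ω' => A.indicator (fun _ => (1 : ℝ)) (Z ω')|(TCITE_comap X)]) ω ∂P := by
          refine integral_congr_ae ?_
          filter_upwards [step1 A hA] with ω hω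
          rw [hω]
      _ = ∫ ω, (B.indicator (fun _ => (1 : ℝ)) (η ω) * C.indicator (fun _ => (1 : ℝ)) (X ω) *
              (P[fun ω' => A.indicator (fun _ => (1 : ℝ)) (Z ω')|(TCITE_comap X)]) ω) *
            (P[fun ω => b (ε ω)|(TCITE_comap (fun ω => (η ω, X ω)))]) ω ∂P :=
          integral_congr_ae (Filter.Eventually.of_forall fun ω => by ring)
      _ = ∫ ω, (B.indicator (fun _ => (1 : ℝ)) (η ω) * C.indicator (fun _ => (1 : ℝ)) (X ω) *
              (P[fun ω' => A.indicator (fun _ => (1 : ℝ)) (Z ω')|(TCITE_comap X)]) ω) *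
            b (ε ω) ∂P := by
          refine (TCITE_integral_mul_condexp hmGle
            (k := fun ω => B.indicator (fun _ => (1 : ℝ)) (η ω) *
              C.indicator (fun _ => (1 : ℝ)) (X ω) *
              (P[fun ω' => A.indicator (fun _ => (1 : ℝ)) (Z ω')|(TCITE_comap X)]) ω)
            ((hIBsmG.mul hICsmG).mul (stronglyMeasurable_condExp.mono hXG)) ?_ hbεi).symm
          refine Integrable.congr (TCITE_integrable_bdd_mul
            (k := fun ω => B.indicator (fun _ => (1 : ℝ)) (η ω) *
              C.indicator (fun _ => (1 : ℝ)) (X ω) * b (ε ω))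
            integrable_condExp ((hIBm.mul hICm).mul hbεm).aestronglyMeasurable
            (C := 1 * 1 * Cb) (fun ω => TCITE_abs_mul_le
              (TCITE_abs_mul_le (TCITE_abs_indicator_one_le _ _) (TCITE_abs_indicator_one_le _ _))
              (hCb _)))
            (Filter.Eventually.of_forall fun ω => by ring)
      _ = ∫ ω, (C.indicator (fun _ => (1 : ℝ)) (X ω) *
              (P[fun ω' => A.indicator (fun _ => (1 : ℝ)) (Z ω')|(TCITE_comap X)]) ω) *
            (b (ε ω) * B.indicator (fun _ => (1 : ℝ)) (η ω)) ∂P :=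
          integral_congr_ae (Filter.Eventually.of_forall fun ω => by ring)
      _ = ∫ ω, (C.indicator (fun _ => (1 : ℝ)) (X ω) *
              (P[fun ω' => A.indicator (fun _ => (1 : ℝ)) (Z ω')|(TCITE_comap X)]) ω) *
            (P[fun ω' => b (ε ω') * B.indicator (fun _ => (1 : ℝ)) (η ω')|(TCITE_comap X)]) ω ∂P := by
          refine TCITE_integral_mul_condexp hmXle
            (k := fun ω => C.indicator (fun _ => (1 : ℝ)) (X ω) *
              (P[fun ω' => A.indicator (fun _ => (1 : ℝ)) (Z ω')|(TCITE_comap X)]) ω)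
            (hICsmX.mul stronglyMeasurable_condExp) ?_ hbIBi
          refine Integrable.congr (TCITE_integrable_bdd_mul
            (k := fun ω => C.indicator (fun _ => (1 : ℝ)) (X ω) *
              (b (ε ω) * B.indicator (fun _ => (1 : ℝ)) (η ω)))
            integrable_condExp ((hICm.mul (hbεm.mul hIBm))).aestronglyMeasurable
            (C := 1 * (Cb * 1)) (fun ω => TCITE_abs_mul_le (TCITE_abs_indicator_one_le _ _)
              (TCITE_abs_mul_le (hCb _) (TCITE_abs_indicator_one_le _ _))))
            (Filter.Eventually.of_forall fun ω => by ring)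
      _ = ∫ ω, C.indicator (fun _ => (1 : ℝ)) (X ω) *
            ((P[fun ω' => A.indicator (fun _ => (1 : ℝ)) (Z ω')|(TCITE_comap X)]) ω *
              (P[fun ω' => b (ε ω') * B.indicator (fun _ => (1 : ℝ)) (η ω')|(TCITE_comap X)]) ω) ∂P :=
          integral_congr_ae (Filter.Eventually.of_forall fun ω => by ring)
      _ = ∫ ω, C.indicator (fun _ => (1 : ℝ)) (X ω) *
            (P[fun ω' => A.indicator (fun _ => (1 : ℝ)) (Z ω') *
              (b (ε ω') * B.indicator (fun _ => (1 : ℝ)) (η ω'))|(TCITE_comap X)]) ω ∂P := by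
          refine integral_congr_ae ?_
          filter_upwards [key2'] with ω hω
          rw [hω]
      _ = ∫ ω, C.indicator (fun _ => (1 : ℝ)) (X ω) *
            (A.indicator (fun _ => (1 : ℝ)) (Z ω) *
              (b (ε ω) * B.indicator (fun _ => (1 : ℝ)) (η ω))) ∂P :=
          (TCITE_integral_mul_condexp hmXle hICsmX
            (TCITE_integrable_bdd_mul
              (k := fun ω => C.indicator (fun _ => (1 : ℝ)) (X ω)) hIAbIBi
              hICm.aestronglyMeasurable (C := 1)
              (fun ω => TCITE_abs_indicator_one_le _ _)) hIAbIBi).symm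
      _ = ∫ ω, C.indicator (fun _ => (1 : ℝ)) (X ω) *
            (B.indicator (fun _ => (1 : ℝ)) (η ω) *
              (A.indicator (fun _ => (1 : ℝ)) (Z ω) * b (ε ω))) ∂P :=
          integral_congr_ae (Filter.Eventually.of_forall fun ω => by ring)
  -- Step 3 : conclusion
  have hfi : Integrable (fun ω => aD ω * b (ε ω)) P :=
    TCITE_integrable_bdd_mul (k := aD) hbεi haDm.aestronglyMeasurable hCa
  have hψai : Integrable (fun ω => (P[aD|(TCITE_comap (fun ω => (η ω, X ω)))]) ω *
      (P[fun ω' => b (ε ω')|(TCITE_comap (fun ω => (η ω, X ω)))]) ω) P := by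
    refine Integrable.bdd_mul (c := max Ca 0) integrable_condExp
      ((stronglyMeasurable_condExp.mono hmGle).aestronglyMeasurable) ?_
    have hbdd := ae_bdd_condExp_of_ae_bdd (μ := P)
      (m := TCITE_comap (fun ω => (η ω, X ω))) (R := Ca.toNNReal) (f := aD)
      (Filter.Eventually.of_forall fun ω => (hCa ω).trans (Real.le_coe_toNNReal Ca))
    filter_upwards [hbdd] with ω hω
    simpa [Real.norm_eq_abs, Real.coe_toNNReal'] using hω
  refine (ae_eq_condExp_of_forall_setIntegral_eq hmGle hfi
    (fun s _ _ => hψai.integrableOn) ?_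
    (stronglyMeasurable_condExp.mul stronglyMeasurable_condExp).aestronglyMeasurable).symm
  intro s hs _
  have hsm : MeasurableSet[mΩ] s := hmGle s hs
  have hIsm : Measurable[mΩ] (s.indicator (fun _ => (1 : ℝ))) := measurable_const.indicator hsm
  have hIs_smG : StronglyMeasurable[(TCITE_comap (fun ω => (η ω, X ω)))]
      (s.indicator (fun _ => (1 : ℝ))) := stronglyMeasurable_const.indicator hs
  rw [TCITE_setIntegral_eq_indicator_mul hsm, TCITE_setIntegral_eq_indicator_mul hsm]
  calc ∫ ω, s.indicator (fun _ => (1 : ℝ)) ω *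
          ((P[aD|(TCITE_comap (fun ω => (η ω, X ω)))]) ω *
            (P[fun ω' => b (ε ω')|(TCITE_comap (fun ω => (η ω, X ω)))]) ω) ∂P
      = ∫ ω, (s.indicator (fun _ => (1 : ℝ)) ω *
            (P[fun ω' => b (ε ω')|(TCITE_comap (fun ω => (η ω, X ω)))]) ω) *
          (P[aD|(TCITE_comap (fun ω => (η ω, X ω)))]) ω ∂P :=
        integral_congr_ae (Filter.Eventually.of_forall fun ω => by ring)
    _ = ∫ ω, (s.indicator (fun _ => (1 : ℝ)) ω *
            (P[fun ω' => b (ε ω')|(TCITE_comap (fun ω => (η ω, X ω)))]) ω) * aD ω ∂P := by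
        refine (TCITE_integral_mul_condexp hmGle
          (k := fun ω => s.indicator (fun _ => (1 : ℝ)) ω *
            (P[fun ω' => b (ε ω')|(TCITE_comap (fun ω => (η ω, X ω)))]) ω)
          (hIs_smG.mul stronglyMeasurable_condExp) ?_ haDi).symm
        refine Integrable.congr (TCITE_integrable_bdd_mul
          (k := fun ω => s.indicator (fun _ => (1 : ℝ)) ω * aD ω)
          integrable_condExp (hIsm.mul haDm).aestronglyMeasurable
          (C := 1 * Ca) (fun ω => TCITE_abs_mul_le (TCITE_abs_indicator_one_le _ _) (hCa _)))
          (Filter.Eventually.of_forall fun ω => by ring)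
    _ = ∫ ω, (s.indicator (fun _ => (1 : ℝ)) ω * aD ω) *
          (P[fun ω' => b (ε ω')|(TCITE_comap (fun ω => (η ω, X ω)))]) ω ∂P :=
        integral_congr_ae (Filter.Eventually.of_forall fun ω => by ring)
    _ = ∫ ω, (s.indicator (fun _ => (1 : ℝ)) ω * aD ω) *
          (P[fun ω' => b (ε ω')|(TCITE_comap (fun ω => (Z ω, (η ω, X ω))))]) ω ∂P := by
        refine integral_congr_ae ?_
        filter_upwards [step2] with ω hω
        rw [hω]
    _ = ∫ ω, (s.indicator (fun _ => (1 : ℝ)) ω * aD ω) * b (ε ω) ∂P := by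
        refine (TCITE_integral_mul_condexp hmTle
          (k := fun ω => s.indicator (fun _ => (1 : ℝ)) ω * aD ω)
          ((hIs_smG.mono hGT).mul haDT) ?_ hbεi).symm
        exact TCITE_integrable_bdd_mul
          (k := fun ω => s.indicator (fun _ => (1 : ℝ)) ω * aD ω)
          hbεi (hIsm.mul haDm).aestronglyMeasurable
          (C := 1 * Ca) (fun ω => TCITE_abs_mul_le (TCITE_abs_indicator_one_le _ _) (hCa _))
    _ = ∫ ω, s.indicator (fun _ => (1 : ℝ)) ω * (aD ω * b (ε ω)) ∂P :=
        integral_congr_ae (Filter.Eventually.of_forall fun ω => by ring)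

end TCITE_Main

/-- **Theorem 2(i).** In the triangular model `D = q(Z,X,η)`, if the instrument `Z` is
conditionally independent of the pair of errors `(ε,η)` given the controls `X`, then the
treatment `D` is conditionally independent of `ε` given `(η,X)`: for all bounded measurable
`a, b : ℝ → ℝ`, `E[a(D) b(ε) | σ(η,X)] = E[a(D) | σ(η,X)] ⬝ E[b(ε) | σ(η,X)]` a.s. -/
theorem triangular_condIndep_treatment_error
    {Ω : Type*} {mΩ : MeasurableSpace Ω} (P : Measure Ω) [IsProbabilityMeasure P]
    {m k : ℕ}
    (Z : Ω → (Fin m → ℝ)) (X : Ω → (Fin k → ℝ)) (ε η : Ω → ℝ)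
    (hZ : Measurable Z) (hX : Measurable X) (hε : Measurable ε) (hη : Measurable η)
    (q : (Fin m → ℝ) → (Fin k → ℝ) → ℝ → ℝ)
    (hq : Measurable fun p : (Fin m → ℝ) × (Fin k → ℝ) × ℝ => q p.1 p.2.1 p.2.2)
    (D : Ω → ℝ) (hD : ∀ ω, D ω = q (Z ω) (X ω) (η ω))
    -- instrument exogeneity: `Z ⫫ (ε,η) | X`
    (hexog : ∀ (f : (Fin m → ℝ) → ℝ) (g : ℝ × ℝ → ℝ), Measurable f → Measurable g →
      (∃ C, ∀ x, |f x| ≤ C) → (∃ C, ∀ x, |g x| ≤ C) →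
      P[fun ω => f (Z ω) * g (ε ω, η ω) | MeasurableSpace.comap X inferInstance]
        =ᵐ[P] fun ω => (P[fun ω' => f (Z ω') | MeasurableSpace.comap X inferInstance]) ω *
          (P[fun ω' => g (ε ω', η ω') | MeasurableSpace.comap X inferInstance]) ω) :
    -- conclusion: `D ⫫ ε | (η,X)`
    ∀ (a b : ℝ → ℝ), Measurable a → Measurable b →
      (∃ C, ∀ x, |a x| ≤ C) → (∃ C, ∀ x, |b x| ≤ C) →
      P[fun ω => a (D ω) * b (ε ω) |
          MeasurableSpace.comap (fun ω => (η ω, X ω)) inferInstance]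
        =ᵐ[P] fun ω =>
          (P[fun ω' => a (D ω') |
              MeasurableSpace.comap (fun ω => (η ω, X ω)) inferInstance]) ω *
          (P[fun ω' => b (ε ω') |
              MeasurableSpace.comap (fun ω => (η ω, X ω)) inferInstance]) ω := by
  intro a b ha hb hCa hCb
  obtain ⟨Ca, hCa⟩ := hCa
  obtain ⟨Cb, hCb⟩ := hCb
  have hDmeas : Measurable D := by
    have hDeq : D = fun ω => q (Z ω) (X ω) (η ω) := funext hD
    rw [hDeq]
    exact hq.comp (hZ.prodMk (hX.prodMk hη))
  have haDT : StronglyMeasurable[TCITE_comap (fun ω => (Z ω, (η ω, X ω)))]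
      (fun ω => a (D ω)) := by
    have hDeq : (fun ω => a (D ω)) = fun ω => a (q (Z ω) (X ω) (η ω)) :=
      funext fun ω => by rw [hD]
    rw [hDeq]
    have hW3 : Measurable[TCITE_comap (fun ω => (Z ω, (η ω, X ω)))]
        (fun ω => (Z ω, (η ω, X ω))) := Measurable.of_comap_le le_rfl
    exact (ha.comp (hq.comp ((measurable_fst.comp hW3).prodMk
      (((measurable_snd.comp (measurable_snd.comp hW3))).prodMk
        (measurable_fst.comp (measurable_snd.comp hW3)))))).stronglyMeasurable
  exact TCITE_main P Z η X ε hZ hη hX hε hexog (fun ω => a (D ω)) (ha.comp hDmeas) haDT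
    Ca (fun ω => hCa _) b hb Cb hCb
end

section
/- Let (Ω,𝓕,P) be a probability space and let Z : Ω → ℝ^m, X : Ω → ℝ^k and η : Ω → ℝ be random variables with η independent of the pair (Z,X). Let q : ℝ^m × ℝ^k × ℝ → ℝ be measurable such that for each fixed (z,x), e ↦ q(z,x,e) is continuous and strictly increasing, with inverse q^{-1}(z,x,·) on its range, and set D = q(Z,X,η). Assume η is continuously distributed with cumulative distribution function F_η that is continuous and strictly increasing on the support of η. Then for law-of-(Z,X)-almost every (z,x) and every d in the range of q(z,x,·), the conditional CDF of D given (Z,X) = (z,x) satisfies F_{D|Z=z,X=x}(d) = F_η(q^{-1}(z,x,d)); consequently the control variable V := F_{D|Z,X}(D) satisfies V = F_η(η) P-almost surely. -/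
open MeasureTheory ProbabilityTheory

/-- The (topological) support of a measure: the set of points all of whose neighbourhoods
have positive measure. -/
def measureSupport {α : Type*} [TopologicalSpace α] [MeasurableSpace α]
    (μ : Measure α) : Set α :=
  {x | ∀ U ∈ nhds x, μ U ≠ 0}

/-- Auxiliary kernel: `w ↦ (map of μ by q w.1 w.2)`. -/
noncomputable def qKernel {m k : ℕ} (μ : Measure ℝ) [SFinite μ]
    (q : (Fin m → ℝ) → (Fin k → ℝ) → ℝ → ℝ)
    (hq : Measurable fun p : (Fin m → ℝ) × (Fin k → ℝ) × ℝ => q p.1 p.2.1 p.2.2)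
    (hqc : ∀ z x, Continuous (q z x)) :
    ProbabilityTheory.Kernel ((Fin m → ℝ) × (Fin k → ℝ)) ℝ where
  toFun w := μ.map (q w.1 w.2)
  measurable' := by
    have hqf : Measurable fun p : ((Fin m → ℝ) × (Fin k → ℝ)) × ℝ => q p.1.1 p.1.2 p.2 :=
      hq.comp ((measurable_fst.comp measurable_fst).prodMk
        ((measurable_snd.comp measurable_fst).prodMk measurable_snd))
    refine Measure.measurable_of_measurable_coe _ fun s hs => ?_
    simp_rw [Measure.map_apply (hqc _ _).measurable hs]
    exact measurable_measure_prodMk_left (hqf hs)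

@[simp] lemma qKernel_apply {m k : ℕ} (μ : Measure ℝ) [SFinite μ]
    (q : (Fin m → ℝ) → (Fin k → ℝ) → ℝ → ℝ)
    (hq : Measurable fun p : (Fin m → ℝ) × (Fin k → ℝ) × ℝ => q p.1 p.2.1 p.2.2)
    (hqc : ∀ z x, Continuous (q z x)) (w : (Fin m → ℝ) × (Fin k → ℝ)) :
    qKernel μ q hq hqc w = μ.map (q w.1 w.2) := rfl

/-- **Control-variable construction of Theorem 2(ii)** (following Imbens–Newey).  In the
triangular model `D = q(Z,X,η)` with `e ↦ q(z,x,e)` continuous and strictly increasing,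
`η ⫫ (Z,X)` and `η` continuously distributed with CDF `Fη` continuous and strictly increasing
on its support, the conditional CDF of `D` given `(Z,X) = (z,x)` satisfies
`F_{D|Z=z,X=x}(d) = Fη(q⁻¹(z,x,d))` for a.e. `(z,x)` and all `d` in the range of `q(z,x,·)`;
consequently `V := F_{D|Z,X}(D) = Fη(η)` `P`-almost surely. -/
theorem conditional_cdf_control_variable
    {Ω : Type*} {mΩ : MeasurableSpace Ω} (P : Measure Ω) [IsProbabilityMeasure P]
    {m k : ℕ}
    (Z : Ω → (Fin m → ℝ)) (X : Ω → (Fin k → ℝ)) (η : Ω → ℝ)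
    (hZ : Measurable Z) (hX : Measurable X) (hη : Measurable η)
    (hindep : IndepFun η (fun ω => (Z ω, X ω)) P)
    (q : (Fin m → ℝ) → (Fin k → ℝ) → ℝ → ℝ)
    (hq : Measurable fun p : (Fin m → ℝ) × (Fin k → ℝ) × ℝ => q p.1 p.2.1 p.2.2)
    (hqcont : ∀ z x, Continuous (q z x)) (hqmono : ∀ z x, StrictMono (q z x))
    (qinv : (Fin m → ℝ) → (Fin k → ℝ) → ℝ → ℝ)
    (hqinv : ∀ z x e, qinv z x (q z x e) = e)
    (D : Ω → ℝ) (hD : ∀ ω, D ω = q (Z ω) (X ω) (η ω))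
    (hηcont : P.map η ≪ MeasureTheory.volume)
    (Fη : ℝ → ℝ) (hFη : ∀ e, Fη e = (P.map η (Set.Iic e)).toReal)
    (hFηcont : Continuous Fη)
    (hFηmono : StrictMonoOn Fη (measureSupport (P.map η))) :
    (∀ᵐ p ∂(P.map fun ω => (Z ω, X ω)), ∀ d ∈ Set.range (q p.1 p.2),
      condDistrib D (fun ω => (Z ω, X ω)) P p (Set.Iic d)
        = ENNReal.ofReal (Fη (qinv p.1 p.2 d))) ∧
    (∀ᵐ ω ∂P,
      (condDistrib D (fun ω' => (Z ω', X ω')) P (Z ω, X ω) (Set.Iic (D ω))).toReal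
        = Fη (η ω)) := by
  have hWmeas : Measurable fun ω => (Z ω, X ω) := hZ.prodMk hX
  have hDmeas : Measurable D := by
    have : D = (fun p : (Fin m → ℝ) × (Fin k → ℝ) × ℝ => q p.1 p.2.1 p.2.2) ∘
        fun ω => (Z ω, X ω, η ω) := funext fun ω => hD ω
    rw [this]
    exact hq.comp (hZ.prodMk (hX.prodMk hη))
  haveI : IsProbabilityMeasure (P.map η) := Measure.isProbabilityMeasure_map hη.aemeasurable
  set κ := qKernel (P.map η) q hq hqcont with hκdef
  haveI : IsMarkovKernel κ :=
    ⟨fun w => Measure.isProbabilityMeasure_map (hqcont w.1 w.2).measurable.aemeasurable⟩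
  -- joint law = compProd
  have hprodlaw : P.map (fun ω => ((Z ω, X ω), η ω))
      = (P.map fun ω => (Z ω, X ω)).prod (P.map η) := by
    exact (indepFun_iff_map_prod_eq_prod_map_map hWmeas.aemeasurable
      hη.aemeasurable).mp hindep.symm
  have hg : Measurable fun p : ((Fin m → ℝ) × (Fin k → ℝ)) × ℝ => (p.1, q p.1.1 p.1.2 p.2) :=
    measurable_fst.prodMk (hq.comp ((measurable_fst.comp measurable_fst).prodMk
      ((measurable_snd.comp measurable_fst).prodMk measurable_snd)))
  have hjoint : P.map (fun ω => ((Z ω, X ω), D ω)) = (P.map fun ω => (Z ω, X ω)) ⊗ₘ κ := by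
    have hfun : (fun ω => ((Z ω, X ω), D ω))
        = (fun p : ((Fin m → ℝ) × (Fin k → ℝ)) × ℝ => (p.1, q p.1.1 p.1.2 p.2)) ∘
            fun ω => ((Z ω, X ω), η ω) := funext fun ω => by
      simp [Function.comp, hD ω]
    rw [hfun, ← Measure.map_map hg (hWmeas.prodMk hη), hprodlaw]
    ext s hs
    rw [Measure.map_apply hg hs, Measure.prod_apply (hg hs),
      Measure.compProd_apply hs]
    refine lintegral_congr fun w => ?_
    rw [hκdef, qKernel_apply, Measure.map_apply (hqcont w.1 w.2).measurable
      (measurable_prodMk_left hs)]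
    rfl
  have key := condDistrib_ae_eq_of_measure_eq_compProd_of_measurable hWmeas hDmeas hjoint
  have hFηnonneg : ∀ e, 0 ≤ Fη e := fun e => (hFη e) ▸ ENNReal.toReal_nonneg
  have main : ∀ᵐ p ∂(P.map fun ω => (Z ω, X ω)), ∀ d ∈ Set.range (q p.1 p.2),
      condDistrib D (fun ω => (Z ω, X ω)) P p (Set.Iic d)
        = ENNReal.ofReal (Fη (qinv p.1 p.2 d)) := by
    filter_upwards [key] with w hw
    rintro d ⟨e, rfl⟩
    rw [hw, hκdef, qKernel_apply,
      Measure.map_apply (hqcont w.1 w.2).measurable measurableSet_Iic]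
    have hpre : (q w.1 w.2) ⁻¹' Set.Iic (q w.1 w.2 e) = Set.Iic e := by
      ext e'; simp [(hqmono w.1 w.2).le_iff_le]
    rw [hpre, hqinv, hFη e, ENNReal.ofReal_toReal (measure_ne_top _ _)]
  refine ⟨main, ?_⟩
  have main' : ∀ᵐ ω ∂P, ∀ d ∈ Set.range (q (Z ω) (X ω)),
      condDistrib D (fun ω' => (Z ω', X ω')) P (Z ω, X ω) (Set.Iic d)
        = ENNReal.ofReal (Fη (qinv (Z ω) (X ω) d)) :=
    ae_of_ae_map hWmeas.aemeasurable main
  filter_upwards [main'] with ω hω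
  have hd : D ω ∈ Set.range (q (Z ω) (X ω)) := ⟨η ω, (hD ω).symm⟩
  rw [hω (D ω) hd, hD ω, hqinv, ENNReal.toReal_ofReal (hFηnonneg _)]
end

section
/- Let (Ω,𝓕,P) be a probability space and let D : Ω → ℝ and X : Ω → ℝ^k be measurably separated random variables. Let Y = f(D) + h(X) + ε be integrable, where f : ℝ → ℝ and h : ℝ^k → ℝ are measurable, and assume the conditional mean independence condition E[ε | σ(D,X)] = E[ε | σ(X)] P-almost surely. Then f is identified from the regression function up to an additive constant: for any measurable functions f̃ : ℝ → ℝ and H̃ : ℝ^k → ℝ with E[Y | σ(D,X)] = f̃(D) + H̃(X) P-almost surely, the difference f(D) − f̃(D) is P-almost surely equal to a constant. -/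
open MeasureTheory ProbabilityTheory

/-- Two random variables `D` and `X` are *measurably separated* (under `P`) if any measurable
function of `D` that is `P`-a.s. equal to a measurable function of `X` is `P`-a.s. constant. -/
def MeasurablySeparated {Ω E F : Type*} [MeasurableSpace Ω] [MeasurableSpace E]
    [MeasurableSpace F] (P : Measure Ω) (D : Ω → E) (X : Ω → F) : Prop :=
  ∀ (l : E → ℝ) (q : F → ℝ), Measurable l → Measurable q →
    (fun ω => l (D ω)) =ᵐ[P] (fun ω => q (X ω)) →
    ∃ c : ℝ, (fun ω => l (D ω)) =ᵐ[P] fun _ => c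

/-- **Example 1.1 (nonparametric additive model).** In `Y = f(D) + h(X) + ε` with
`E[ε | σ(D,X)] = E[ε | σ(X)]` a.s. and `D`, `X` measurably separated, the treatment component
`f` is identified from the regression function up to an additive constant: any additively
separable version `f̃(D) + H̃(X)` of `E[Y | σ(D,X)]` has `f(D) − f̃(D)` a.s. constant. -/
theorem additive_model_identification
    {Ω : Type*} {mΩ : MeasurableSpace Ω} (P : Measure Ω) [IsProbabilityMeasure P]
    {k : ℕ}
    (D : Ω → ℝ) (X : Ω → (Fin k → ℝ)) (ε : Ω → ℝ)
    (hD : Measurable D) (hX : Measurable X) (hε : Measurable ε)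
    (hsep : MeasurablySeparated P D X)
    (f : ℝ → ℝ) (h : (Fin k → ℝ) → ℝ) (hf : Measurable f) (hh : Measurable h)
    (Y : Ω → ℝ) (hY : ∀ ω, Y ω = f (D ω) + h (X ω) + ε ω)
    (hYint : Integrable Y P) (hεint : Integrable ε P)
    (hCMI : P[ε | MeasurableSpace.comap (fun ω => (D ω, X ω)) inferInstance]
      =ᵐ[P] P[ε | MeasurableSpace.comap X inferInstance]) :
    ∀ (ftil : ℝ → ℝ) (Htil : (Fin k → ℝ) → ℝ), Measurable ftil → Measurable Htil →
      (P[Y | MeasurableSpace.comap (fun ω => (D ω, X ω)) inferInstance]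
        =ᵐ[P] fun ω => ftil (D ω) + Htil (X ω)) →
      ∃ c : ℝ, (fun ω => f (D ω) - ftil (D ω)) =ᵐ[P] fun _ => c := by
  intro ftil Htil hftil hHtil hreg
  set m : MeasurableSpace Ω := MeasurableSpace.comap (fun ω => (D ω, X ω)) inferInstance with hm_def
  have hm : m ≤ mΩ := (hD.prodMk hX).comap_le
  -- the "structural" part W := f(D) + h(X)
  set W : Ω → ℝ := fun ω => f (D ω) + h (X ω) with hW_def
  have hWint : Integrable W P := by
    have : W = fun ω => Y ω - ε ω := by
      funext ω; simp only [hW_def, hY ω]; ring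
    rw [this]; exact hYint.sub hεint
  have hDXm : Measurable[m] (fun ω => (D ω, X ω)) := Measurable.of_comap_le le_rfl
  have hWm : StronglyMeasurable[m] W := by
    have : Measurable[m] W := ((hf.comp measurable_fst).add (hh.comp measurable_snd)).comp hDXm
    exact this.stronglyMeasurable
  haveI : SigmaFinite (P.trim hm) := by
    have : IsFiniteMeasure (P.trim hm) := isFiniteMeasure_trim hm
    infer_instance
  -- E[Y|m] = W + E[ε|m]
  have hYW : Y = fun ω => W ω + ε ω := by funext ω; simp [hW_def, hY ω]
  have hEY : P[Y|m] =ᵐ[P] fun ω => W ω + (P[ε|m]) ω := by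
    have h1 : P[Y|m] =ᵐ[P] P[W|m] + P[ε|m] := by
      rw [hYW]; exact condExp_add hWint hεint m
    have h2 : P[W|m] = W := condExp_of_stronglyMeasurable hm hWm hWint
    filter_upwards [h1] with ω h1
    simp only [Pi.add_apply] at h1
    rw [h1, h2]
  -- E[ε|σ(X)] factors through X via condDistrib
  set g : (Fin k → ℝ) → ℝ := fun x => ∫ y, y ∂(condDistrib ε X P x) with hg_def
  have hg : Measurable g := by
    have : StronglyMeasurable fun x => ∫ y, (fun (_ : Fin k → ℝ) (y : ℝ) => y) x y
        ∂(condDistrib ε X P x) :=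
      StronglyMeasurable.integral_kernel_prod_right
        (stronglyMeasurable_id.comp_measurable measurable_snd)
    exact this.measurable
  have hεX : P[ε | MeasurableSpace.comap X inferInstance] =ᵐ[P] fun ω => g (X ω) :=
    condExp_ae_eq_integral_condDistrib' hX hεint
  -- chain everything
  have hchain : (fun ω => f (D ω) - ftil (D ω))
      =ᵐ[P] fun ω => Htil (X ω) - h (X ω) - g (X ω) := by
    filter_upwards [hreg, hEY, hCMI, hεX] with ω h1 h2 h3 h4
    have : ftil (D ω) + Htil (X ω) = (f (D ω) + h (X ω)) + g (X ω) := by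
      rw [← h1, h2, h3, h4]
    linarith
  exact hsep (fun d => f d - ftil d) (fun x => Htil x - h x - g x)
    (hf.sub hftil) ((hHtil.sub hh).sub hg) hchain
end

section
/- Let (Ω,𝓕,P) be a probability space and let D, X, ε, η, Z be random variables with values in standard Borel spaces such that D = q(Z,X,η) for a measurable q with e ↦ q(z,x,e) strictly increasing and continuous for each (z,x), η is continuously distributed with CDF F_η continuous and strictly increasing on the support of η, η is independent of (Z,X), and Z is conditionally independent of (ε,η) given X. Set V := F_{D|Z,X}(D). Then V = F_η(η) P-almost surely and D is conditionally independent of ε given (X,V): for all bounded measurable a, b : ℝ → ℝ, E[a(D) b(ε) | σ(X,V)] = E[a(D) | σ(X,V)] · E[b(ε) | σ(X,V)] P-almost surely. -/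
open MeasureTheory ProbabilityTheory

lemma isClosed_measureSupport (μ : Measure ℝ) : IsClosed (measureSupport μ) := by
  rw [← isOpen_compl_iff]
  refine isOpen_iff_mem_nhds.2 fun x hx => ?_
  simp only [Set.mem_compl_iff, measureSupport, Set.mem_setOf_eq, not_forall] at hx
  obtain ⟨U, hU, hU0⟩ := hx
  refine Filter.mem_of_superset (interior_mem_nhds.2 hU) fun y hy => ?_
  simp only [Set.mem_compl_iff, measureSupport, Set.mem_setOf_eq, not_forall]
  exact ⟨U, mem_nhds_iff.2 ⟨interior U, interior_subset, isOpen_interior, hy⟩, hU0⟩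

lemma measureSupport_compl_null (μ : Measure ℝ) : μ (measureSupport μ)ᶜ = 0 := by
  classical
  set J : ℚ × ℚ → Set ℝ := fun r =>
    if μ (Set.Ioo (r.1 : ℝ) (r.2 : ℝ)) = 0 then Set.Ioo (r.1 : ℝ) (r.2 : ℝ) else ∅ with hJ
  have hsub : (measureSupport μ)ᶜ ⊆ ⋃ r, J r := by
    intro x hx
    simp only [Set.mem_compl_iff, measureSupport, Set.mem_setOf_eq, not_forall] at hx
    obtain ⟨U, hU, hU0⟩ := hx
    obtain ⟨a, b, hab, habU⟩ := mem_nhds_iff_exists_Ioo_subset.1 hU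
    obtain ⟨p, hp1, hp2⟩ := exists_rat_btwn hab.1
    obtain ⟨q', hq1, hq2⟩ := exists_rat_btwn hab.2
    refine Set.mem_iUnion.2 ⟨(p, q'), ?_⟩
    have h0 : μ (Set.Ioo (p : ℝ) (q' : ℝ)) = 0 :=
      measure_mono_null (fun y hy => habU ⟨hp1.trans hy.1, hy.2.trans hq2⟩) (not_not.1 hU0)
    simp only [hJ, h0, if_pos]
    exact ⟨hp2, hq1⟩
  refine measure_mono_null hsub (measure_iUnion_null fun r => ?_)
  by_cases h : μ (Set.Ioo (r.1 : ℝ) (r.2 : ℝ)) = 0 <;> simp [hJ, h]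

lemma exists_Q (μ : Measure ℝ) (Fη : ℝ → ℝ) (hFηcont : Continuous Fη)
    (hmono : StrictMonoOn Fη (measureSupport μ)) :
    ∃ Q : ℝ → ℝ, Measurable Q ∧ ∀ e ∈ measureSupport μ, Q (Fη e) = e := by
  have hSm : MeasurableSet (measureSupport μ) := (isClosed_measureSupport μ).measurableSet
  haveI : StandardBorelSpace (measureSupport μ) := hSm.standardBorel
  set g : measureSupport μ → ℝ := fun e => Fη e with hg
  have hginj : Function.Injective g := by
    intro e1 e2 h
    exact Subtype.ext (hmono.injOn e1.2 e2.2 h)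
  have hgmeas : Measurable g := (hFηcont.comp continuous_subtype_val).measurable
  have hemb : MeasurableEmbedding g := hgmeas.measurableEmbedding hginj
  refine ⟨Function.extend g (fun e => (e : ℝ)) (fun _ => 0),
    hemb.measurable_extend measurable_subtype_coe measurable_const, fun e he => ?_⟩
  have : Fη e = g ⟨e, he⟩ := rfl
  rw [this, hginj.extend_apply]

lemma integrable_of_bdd {Ω : Type*} {m0 : MeasurableSpace Ω} {P : Measure Ω} [IsFiniteMeasure P]
    {f : Ω → ℝ} (hf : AEStronglyMeasurable f P) {C : ℝ} (hC : ∀ ω, |f ω| ≤ C) :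
    Integrable f P :=
  Integrable.mono' (integrable_const C) hf
    (Filter.Eventually.of_forall fun ω => by simpa [Real.norm_eq_abs] using hC ω)

lemma integral_mul_condexp {Ω : Type*} {m0 : MeasurableSpace Ω}
    (P : Measure Ω) [IsProbabilityMeasure P] {m : MeasurableSpace Ω}
    (hm : m ≤ m0) {u w : Ω → ℝ}
    (hu : StronglyMeasurable[m] u) {C : ℝ} (hC : ∀ ω, |u ω| ≤ C) (hw : Integrable w P) :
    ∫ ω, u ω * (P[w|m]) ω ∂P = ∫ ω, u ω * w ω ∂P := by
  haveI : SigmaFinite (P.trim hm) := by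
    have : IsFiniteMeasure (P.trim hm) := isFiniteMeasure_trim hm
    infer_instance
  have h1 : Integrable (fun ω => u ω * w ω) P :=
    hw.bdd_mul ((hu.mono hm).aestronglyMeasurable)
      (Filter.Eventually.of_forall fun ω => by simpa [Real.norm_eq_abs] using hC ω)
  have h2 := condExp_mul_of_stronglyMeasurable_left hu (μ := P) (g := w) h1 hw
  calc ∫ ω, u ω * (P[w|m]) ω ∂P = ∫ ω, (P[fun ω' => u ω' * w ω'|m]) ω ∂P := by
        refine integral_congr_ae ?_
        filter_upwards [h2] with ω hω
        exact hω.symm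
    _ = ∫ ω, u ω * w ω ∂P := integral_condExp hm

lemma partA {Ω : Type*} {mΩ : MeasurableSpace Ω} (P : Measure Ω) [IsProbabilityMeasure P]
    {m k : ℕ}
    (Z : Ω → (Fin m → ℝ)) (X : Ω → (Fin k → ℝ)) (η : Ω → ℝ)
    (hZ : Measurable Z) (hX : Measurable X) (hη : Measurable η)
    (q : (Fin m → ℝ) → (Fin k → ℝ) → ℝ → ℝ)
    (hq : Measurable fun p : (Fin m → ℝ) × (Fin k → ℝ) × ℝ => q p.1 p.2.1 p.2.2)
    (hqmono : ∀ z x, StrictMono (q z x))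
    (D : Ω → ℝ) (hD : ∀ ω, D ω = q (Z ω) (X ω) (η ω))
    (Fη : ℝ → ℝ) (hFη : ∀ e, Fη e = (P.map η (Set.Iic e)).toReal)
    (hindep : IndepFun η (fun ω => (Z ω, X ω)) P)
    (V : Ω → ℝ)
    (hV : ∀ ω, V ω
      = (condDistrib D (fun ω' => (Z ω', X ω')) P (Z ω, X ω) (Set.Iic (D ω))).toReal) :
    (fun ω => V ω) =ᵐ[P] fun ω => Fη (η ω) := by
  classical
  set W : Ω → (Fin m → ℝ) × (Fin k → ℝ) := fun ω => (Z ω, X ω) with hWdef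
  have hW : Measurable W := hZ.prodMk hX
  have hqm : ∀ z x, Measurable (q z x) := fun z x =>
    hq.comp (measurable_const.prodMk (measurable_const.prodMk measurable_id))
  have hDmeas : Measurable D := by
    have : D = fun ω => q (Z ω) (X ω) (η ω) := funext hD
    rw [this]
    exact hq.comp (hZ.prodMk (hX.prodMk hη))
  set μη : Measure ℝ := P.map η with hμη
  haveI : IsProbabilityMeasure μη := Measure.isProbabilityMeasure_map hη.aemeasurable
  set κD : Kernel ((Fin m → ℝ) × (Fin k → ℝ)) ℝ :=
    { toFun := fun w => μη.map (q w.1 w.2)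
      measurable' := by
        refine Measure.measurable_of_measurable_coe _ fun s hs => ?_
        have heq : (fun w : (Fin m → ℝ) × (Fin k → ℝ) => μη.map (q w.1 w.2) s)
            = fun w => μη (Prod.mk w ⁻¹'
              {p : ((Fin m → ℝ) × (Fin k → ℝ)) × ℝ | q p.1.1 p.1.2 p.2 ∈ s}) := by
          funext w
          rw [Measure.map_apply (hqm _ _) hs]
          rfl
        rw [heq]
        refine measurable_measure_prodMk_left ?_
        exact (hq.comp ((measurable_fst.fst).prodMk
          ((measurable_fst.snd).prodMk measurable_snd))) hs } with hκD
  have hκDapp : ∀ w, κD w = μη.map (q w.1 w.2) := fun w => rfl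
  haveI : IsMarkovKernel κD := ⟨fun w => by
    rw [hκDapp]
    exact Measure.isProbabilityMeasure_map (hqm w.1 w.2).aemeasurable⟩
  have hcomp : P.map (fun ω => (W ω, D ω)) = (P.map W) ⊗ₘ κD := by
    haveI : IsProbabilityMeasure (P.map (fun ω => (W ω, D ω))) :=
      Measure.isProbabilityMeasure_map (hW.prodMk hDmeas).aemeasurable
    haveI : IsProbabilityMeasure (P.map W) := Measure.isProbabilityMeasure_map hW.aemeasurable
    refine MeasureTheory.ext_of_generate_finite _ generateFrom_prod.symm isPiSystem_prod ?_ ?_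
    · rintro _ ⟨A, hA, B, hB, rfl⟩
      simp only [Set.mem_setOf_eq] at hA hB
      have hset : MeasurableSet
          {p : ((Fin m → ℝ) × (Fin k → ℝ)) × ℝ | p.1 ∈ A ∧ q p.1.1 p.1.2 p.2 ∈ B} := by
        refine (measurable_fst hA).inter ?_
        exact (hq.comp ((measurable_fst.fst).prodMk
          ((measurable_fst.snd).prodMk measurable_snd))) hB
      rw [Measure.map_apply (hW.prodMk hDmeas) (hA.prod hB),
        Measure.compProd_apply_prod hA hB]
      have hpre : (fun ω => (W ω, D ω)) ⁻¹' (A ×ˢ B)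
          = (fun ω => (W ω, η ω)) ⁻¹'
            {p : ((Fin m → ℝ) × (Fin k → ℝ)) × ℝ | p.1 ∈ A ∧ q p.1.1 p.1.2 p.2 ∈ B} := by
        ext ω
        simp [hWdef, Set.mem_prod, hD ω]
      rw [hpre, ← Measure.map_apply (hW.prodMk hη) hset,
        (indepFun_iff_map_prod_eq_prod_map_map hW.aemeasurable hη.aemeasurable).1 hindep.symm,
        Measure.prod_apply hset]
      have hslice : ∀ w : (Fin m → ℝ) × (Fin k → ℝ),
          μη (Prod.mk w ⁻¹'
            {p : ((Fin m → ℝ) × (Fin k → ℝ)) × ℝ | p.1 ∈ A ∧ q p.1.1 p.1.2 p.2 ∈ B})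
          = A.indicator (fun w => κD w B) w := by
        intro w
        by_cases hw : w ∈ A
        · have : Prod.mk w ⁻¹'
              {p : ((Fin m → ℝ) × (Fin k → ℝ)) × ℝ | p.1 ∈ A ∧ q p.1.1 p.1.2 p.2 ∈ B}
              = (q w.1 w.2) ⁻¹' B := by
            ext e; simp [hw]
          rw [this, Set.indicator_of_mem hw, hκDapp, Measure.map_apply (hqm _ _) hB]
        · have : Prod.mk w ⁻¹'
              {p : ((Fin m → ℝ) × (Fin k → ℝ)) × ℝ | p.1 ∈ A ∧ q p.1.1 p.1.2 p.2 ∈ B}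
              = ∅ := by
            ext e; simp [hw]
          rw [this, Set.indicator_of_notMem hw, measure_empty]
      calc ∫⁻ w, μη (Prod.mk w ⁻¹'
            {p : ((Fin m → ℝ) × (Fin k → ℝ)) × ℝ | p.1 ∈ A ∧ q p.1.1 p.1.2 p.2 ∈ B})
            ∂(P.map W)
          = ∫⁻ w, A.indicator (fun w => κD w B) w ∂(P.map W) := by
            exact lintegral_congr fun w => hslice w
        _ = ∫⁻ w in A, κD w B ∂(P.map W) := lintegral_indicator hA _
    · simp [measure_univ]
  have hfst : (P.map (fun ω => (W ω, D ω))).fst = P.map W := Measure.fst_map_prodMk hDmeas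
  have huniq : ∀ᵐ w ∂(P.map W), κD w = condDistrib D W P w := by
    have h := eq_condKernel_of_measure_eq_compProd κD
      (ρ := P.map (fun ω => (W ω, D ω))) (by rw [hfst]; exact hcomp)
    rw [hfst] at h
    rw [condDistrib_def]
    exact h
  have hae : ∀ᵐ ω ∂P, κD (W ω) = condDistrib D W P (W ω) :=
    ae_of_ae_map hW.aemeasurable huniq
  filter_upwards [hae] with ω hω
  have h1 : V ω = (condDistrib D W P (W ω) (Set.Iic (D ω))).toReal := hV ω
  rw [h1, ← hω, hκDapp, Measure.map_apply (hqm _ _) measurableSet_Iic]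
  have hpre : (q (Z ω) (X ω)) ⁻¹' (Set.Iic (D ω)) = Set.Iic (η ω) := by
    ext e
    simp only [Set.mem_preimage, Set.mem_Iic, hD ω]
    exact (hqmono (Z ω) (X ω)).le_iff_le
  rw [hpre, hFη]
lemma KF {Ω : Type*} {mΩ : MeasurableSpace Ω} (P : Measure Ω) [IsProbabilityMeasure P]
    {m k : ℕ}
    (Z : Ω → (Fin m → ℝ)) (X : Ω → (Fin k → ℝ)) (ε η : Ω → ℝ)
    (hZ : Measurable Z) (hX : Measurable X) (hε : Measurable ε) (hη : Measurable η)
    (hexog : ∀ (f : (Fin m → ℝ) → ℝ) (g : ℝ × ℝ → ℝ), Measurable f → Measurable g →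
      (∃ C, ∀ x, |f x| ≤ C) → (∃ C, ∀ x, |g x| ≤ C) →
      P[fun ω => f (Z ω) * g (ε ω, η ω) | MeasurableSpace.comap X inferInstance]
        =ᵐ[P] fun ω => (P[fun ω' => f (Z ω') | MeasurableSpace.comap X inferInstance]) ω *
          (P[fun ω' => g (ε ω', η ω') | MeasurableSpace.comap X inferInstance]) ω)
    (Φ : (((ℝ × ℝ) × (Fin k → ℝ)) × (Fin m → ℝ)) → ℝ) (hΦ : Measurable Φ)
    {C : ℝ} (hΦC : ∀ p, |Φ p| ≤ C) :
    ∫ ω, Φ (((ε ω, η ω), X ω), Z ω) ∂P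
      = ∫ ω, ∫ z, Φ (((ε ω, η ω), X ω), z) ∂(condDistrib Z X P (X ω)) ∂P := by
  classical
  set W' : Ω → (ℝ × ℝ) × (Fin k → ℝ) := fun ω => ((ε ω, η ω), X ω) with hW'def
  have hW' : Measurable W' := (hε.prodMk hη).prodMk hX
  set κ : Kernel (Fin k → ℝ) (Fin m → ℝ) := condDistrib Z X P with hκdef
  set κ'' : Kernel ((ℝ × ℝ) × (Fin k → ℝ)) (Fin m → ℝ) := κ.comap Prod.snd measurable_snd
    with hκ''def
  have hκ''app : ∀ w, κ'' w = κ w.2 := fun w => rfl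
  have hmX : MeasurableSpace.comap X inferInstance ≤ mΩ := hX.comap_le
  -- the measure equality
  have hμeq : P.map (fun ω => (W' ω, Z ω)) = (P.map W') ⊗ₘ κ'' := by
    haveI : IsProbabilityMeasure (P.map (fun ω => (W' ω, Z ω))) :=
      Measure.isProbabilityMeasure_map (hW'.prodMk hZ).aemeasurable
    haveI : IsProbabilityMeasure (P.map W') := Measure.isProbabilityMeasure_map hW'.aemeasurable
    have hgen1 : MeasurableSpace.generateFrom
        (Set.image2 (· ×ˢ ·) {s : Set (ℝ × ℝ) | MeasurableSet s}
          {t : Set (Fin k → ℝ) | MeasurableSet t}) = Prod.instMeasurableSpace :=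
      generateFrom_prod
    have hspan1 : IsCountablySpanning
        (Set.image2 (· ×ˢ ·) {s : Set (ℝ × ℝ) | MeasurableSet s}
          {t : Set (Fin k → ℝ) | MeasurableSet t}) :=
      isCountablySpanning_measurableSet.prod isCountablySpanning_measurableSet
    have hgen : MeasurableSpace.generateFrom
        (Set.image2 (· ×ˢ ·)
          (Set.image2 (· ×ˢ ·) {s : Set (ℝ × ℝ) | MeasurableSet s}
            {t : Set (Fin k → ℝ) | MeasurableSet t})
          {u : Set (Fin m → ℝ) | MeasurableSet u}) = Prod.instMeasurableSpace :=
      generateFrom_eq_prod hgen1 MeasurableSpace.generateFrom_measurableSet hspan1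
        isCountablySpanning_measurableSet
    have hpi : IsPiSystem
        (Set.image2 (· ×ˢ ·)
          (Set.image2 (· ×ˢ ·) {s : Set (ℝ × ℝ) | MeasurableSet s}
            {t : Set (Fin k → ℝ) | MeasurableSet t})
          {u : Set (Fin m → ℝ) | MeasurableSet u}) :=
      (MeasurableSpace.isPiSystem_measurableSet.prod MeasurableSpace.isPiSystem_measurableSet).prod MeasurableSpace.isPiSystem_measurableSet
    refine ext_of_generate_finite _ hgen.symm hpi ?_ (by simp [measure_univ])
    rintro _ ⟨s1, hs1, Bz, hBz, rfl⟩
    obtain ⟨G, hG, H, hH, rfl⟩ := hs1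
    simp only [Set.mem_setOf_eq] at hG hH hBz
    -- indicators
    set f0 : (Fin m → ℝ) → ℝ := Bz.indicator (fun _ => (1:ℝ)) with hf0
    set g0 : ℝ × ℝ → ℝ := G.indicator (fun _ => (1:ℝ)) with hg0
    set h0 : (Fin k → ℝ) → ℝ := H.indicator (fun _ => (1:ℝ)) with hh0
    have hf0m : Measurable f0 := measurable_const.indicator hBz
    have hg0m : Measurable g0 := measurable_const.indicator hG
    have hh0m : Measurable h0 := measurable_const.indicator hH
    have hf0b : ∀ x, |f0 x| ≤ 1 := fun x => by
      rw [hf0]; unfold Set.indicator; split <;> simp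
    have hg0b : ∀ x, |g0 x| ≤ 1 := fun x => by
      rw [hg0]; unfold Set.indicator; split <;> simp
    have hh0b : ∀ x, |h0 x| ≤ 1 := fun x => by
      rw [hh0]; unfold Set.indicator; split <;> simp
    -- LHS as a real integral
    have hpre : (fun ω => (W' ω, Z ω)) ⁻¹' ((G ×ˢ H) ×ˢ Bz)
        = ((fun ω => (ε ω, η ω)) ⁻¹' G ∩ X ⁻¹' H) ∩ Z ⁻¹' Bz := by
      ext ω; simp [hW'def, Set.mem_prod, and_assoc]
    have hpre_meas : MeasurableSet (((fun ω => (ε ω, η ω)) ⁻¹' G ∩ X ⁻¹' H) ∩ Z ⁻¹' Bz) :=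
      (((hε.prodMk hη) hG).inter (hX hH)).inter (hZ hBz)
    have hLHS : P.map (fun ω => (W' ω, Z ω)) ((G ×ˢ H) ×ˢ Bz)
        = P (((fun ω => (ε ω, η ω)) ⁻¹' G ∩ X ⁻¹' H) ∩ Z ⁻¹' Bz) := by
      rw [Measure.map_apply (hW'.prodMk hZ) (((hG.prod hH)).prod hBz), hpre]
    have hR1 : (P (((fun ω => (ε ω, η ω)) ⁻¹' G ∩ X ⁻¹' H) ∩ Z ⁻¹' Bz)).toReal
        = ∫ ω, h0 (X ω) * (f0 (Z ω) * g0 (ε ω, η ω)) ∂P := by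
      rw [← measureReal_def, ← integral_indicator_one hpre_meas]
      refine integral_congr_ae (Filter.Eventually.of_forall fun ω => ?_)
      by_cases h1 : (ε ω, η ω) ∈ G <;> by_cases h2 : X ω ∈ H <;> by_cases h3 : Z ω ∈ Bz <;>
        simp [Set.indicator_apply, hf0, hg0, hh0, h1, h2, h3]
    -- RHS as a real integral
    have hRHS : ((P.map W') ⊗ₘ κ'') ((G ×ˢ H) ×ˢ Bz)
        = ∫⁻ ω in (fun ω => (ε ω, η ω)) ⁻¹' G ∩ X ⁻¹' H, κ (X ω) Bz ∂P := by
      rw [Measure.compProd_apply_prod (hG.prod hH) hBz]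
      have : ∀ w : (ℝ × ℝ) × (Fin k → ℝ), κ'' w Bz = κ w.2 Bz := fun w => by rw [hκ''app]
      have e3 := setLIntegral_map (μ := P) (g := W')
        (f := fun w : (ℝ × ℝ) × (Fin k → ℝ) => κ w.2 Bz) (hG.prod hH)
        ((Kernel.measurable_coe κ hBz).comp measurable_snd) hW'
      calc ∫⁻ w in G ×ˢ H, κ'' w Bz ∂(P.map W')
          = ∫⁻ w in G ×ˢ H, κ w.2 Bz ∂(P.map W') := by
            exact setLIntegral_congr_fun (hG.prod hH)
              (fun w _ => this w)
        _ = ∫⁻ ω in W' ⁻¹' (G ×ˢ H), κ ((W' ω).2) Bz ∂P := e3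
        _ = ∫⁻ ω in (fun ω => (ε ω, η ω)) ⁻¹' G ∩ X ⁻¹' H, κ (X ω) Bz ∂P := by
            have hseteq : W' ⁻¹' (G ×ˢ H) = (fun ω => (ε ω, η ω)) ⁻¹' G ∩ X ⁻¹' H := by
              ext ω; simp [hW'def, Set.mem_prod]
            rw [hseteq]
    have hκm : Measurable fun ω => κ (X ω) Bz := (Kernel.measurable_coe κ hBz).comp hX
    have hRHS2 : (∫⁻ ω in (fun ω => (ε ω, η ω)) ⁻¹' G ∩ X ⁻¹' H, κ (X ω) Bz ∂P).toReal
        = ∫ ω, (h0 (X ω) * (κ (X ω) Bz).toReal) * g0 (ε ω, η ω) ∂P := by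
      have hmeas2 : MeasurableSet ((fun ω => (ε ω, η ω)) ⁻¹' G ∩ X ⁻¹' H) :=
        ((hε.prodMk hη) hG).inter (hX hH)
      rw [← integral_toReal (hκm.aemeasurable.restrict)
        (Filter.Eventually.of_forall fun ω => measure_lt_top _ _)]
      rw [← integral_indicator hmeas2]
      refine integral_congr_ae (Filter.Eventually.of_forall fun ω => ?_)
      by_cases h1 : (ε ω, η ω) ∈ G <;> by_cases h2 : X ω ∈ H <;>
        simp [Set.indicator_apply, hg0, hh0, h1, h2]
    -- the middle equality via exogeneity
    have hmid : ∫ ω, h0 (X ω) * (f0 (Z ω) * g0 (ε ω, η ω)) ∂P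
        = ∫ ω, (h0 (X ω) * (κ (X ω) Bz).toReal) * g0 (ε ω, η ω) ∂P := by
      have hw_int : Integrable (fun ω => f0 (Z ω) * g0 (ε ω, η ω)) P :=
        integrable_of_bdd ((hf0m.comp hZ).mul (hg0m.comp (hε.prodMk hη))).aestronglyMeasurable
          (C := 1) (fun ω => by
            rw [abs_mul]
            calc |f0 (Z ω)| * |g0 (ε ω, η ω)| ≤ 1 * 1 :=
              mul_le_mul (hf0b _) (hg0b _) (abs_nonneg _) zero_le_one
            _ = 1 := by ring)
      have hu_sm : StronglyMeasurable[MeasurableSpace.comap X inferInstance]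
          (fun ω => h0 (X ω)) :=
        ((hh0m.comp (comap_measurable X)).stronglyMeasurable)
      have step1 : ∫ ω, h0 (X ω) * (f0 (Z ω) * g0 (ε ω, η ω)) ∂P
          = ∫ ω, h0 (X ω) *
            (P[fun ω' => f0 (Z ω') * g0 (ε ω', η ω')|MeasurableSpace.comap X inferInstance]) ω
            ∂P :=
        (integral_mul_condexp P hmX hu_sm (fun ω => hh0b _) hw_int).symm
      have hcd := condDistrib_ae_eq_condExp (μ := P) hX hZ hBz
      have hex := hexog f0 g0 hf0m hg0m ⟨1, hf0b⟩ ⟨1, hg0b⟩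
      have hindf0 : (fun ω => f0 (Z ω)) = (Z ⁻¹' Bz).indicator (fun _ => (1:ℝ)) := by
        funext ω
        by_cases h : Z ω ∈ Bz <;> simp [hf0, Set.indicator_apply, h]
      have step2 : ∫ ω, h0 (X ω) *
            (P[fun ω' => f0 (Z ω') * g0 (ε ω', η ω')|MeasurableSpace.comap X inferInstance]) ω
            ∂P
          = ∫ ω, (h0 (X ω) * (κ (X ω) Bz).toReal) *
            (P[fun ω' => g0 (ε ω', η ω')|MeasurableSpace.comap X inferInstance]) ω ∂P := by
        refine integral_congr_ae ?_
        have hcd' : (fun ω => (κ (X ω) Bz).toReal)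
            =ᵐ[P] P[fun ω' => f0 (Z ω')|MeasurableSpace.comap X inferInstance] := by
          rw [hindf0]
          exact hcd
        filter_upwards [hex, hcd'] with ω h1 h2
        rw [h1, ← h2]
        ring
      have hu2_sm : StronglyMeasurable[MeasurableSpace.comap X inferInstance]
          (fun ω => h0 (X ω) * (κ (X ω) Bz).toReal) := by
        refine Measurable.stronglyMeasurable ?_
        exact (hh0m.comp (comap_measurable X)).mul
          ((measurable_condDistrib hBz).ennreal_toReal)
      have hu2_bdd : ∀ ω, |h0 (X ω) * (κ (X ω) Bz).toReal| ≤ 1 := fun ω => by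
        rw [abs_mul]
        have h1 : (κ (X ω) Bz).toReal ≤ 1 := by
          haveI : IsProbabilityMeasure (κ (X ω)) := IsMarkovKernel.isProbabilityMeasure _
          exact ENNReal.toReal_le_of_le_ofReal zero_le_one (by simpa using prob_le_one)
        have h2 : |(κ (X ω) Bz).toReal| = (κ (X ω) Bz).toReal := abs_of_nonneg ENNReal.toReal_nonneg
        rw [h2]
        calc |h0 (X ω)| * (κ (X ω) Bz).toReal ≤ 1 * 1 :=
          mul_le_mul (hh0b _) h1 ENNReal.toReal_nonneg zero_le_one
        _ = 1 := by ring
      have hg_int : Integrable (fun ω => g0 (ε ω, η ω)) P :=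
        integrable_of_bdd (hg0m.comp (hε.prodMk hη)).aestronglyMeasurable (C := 1)
          (fun ω => hg0b _)
      have step3 : ∫ ω, (h0 (X ω) * (κ (X ω) Bz).toReal) *
            (P[fun ω' => g0 (ε ω', η ω')|MeasurableSpace.comap X inferInstance]) ω ∂P
          = ∫ ω, (h0 (X ω) * (κ (X ω) Bz).toReal) * g0 (ε ω, η ω) ∂P :=
        integral_mul_condexp P hmX hu2_sm hu2_bdd hg_int
      rw [step1, step2, step3]
    -- put it together
    have hLfin : P.map (fun ω => (W' ω, Z ω)) ((G ×ˢ H) ×ˢ Bz) ≠ ⊤ := measure_ne_top _ _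
    have hRfin : ((P.map W') ⊗ₘ κ'') ((G ×ˢ H) ×ˢ Bz) ≠ ⊤ := measure_ne_top _ _
    rw [← ENNReal.toReal_eq_toReal_iff' hLfin hRfin, hLHS, hRHS, hR1, hRHS2, hmid]
  -- conclude via integral_compProd
  haveI : IsProbabilityMeasure (P.map W') := Measure.isProbabilityMeasure_map hW'.aemeasurable
  haveI : IsProbabilityMeasure ((P.map W') ⊗ₘ κ'') := by infer_instance
  have hint : Integrable Φ ((P.map W') ⊗ₘ κ'') :=
    integrable_of_bdd hΦ.aestronglyMeasurable hΦC
  have hinner_sm : StronglyMeasurable fun w => ∫ z, Φ (w, z) ∂κ'' w :=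
    hΦ.stronglyMeasurable.integral_kernel_prod_right'
  calc ∫ ω, Φ (((ε ω, η ω), X ω), Z ω) ∂P
      = ∫ p, Φ p ∂(P.map (fun ω => (W' ω, Z ω))) :=
        (integral_map (hW'.prodMk hZ).aemeasurable hΦ.aestronglyMeasurable).symm
    _ = ∫ p, Φ p ∂((P.map W') ⊗ₘ κ'') := by rw [hμeq]
    _ = ∫ w, ∫ z, Φ (w, z) ∂κ'' w ∂(P.map W') := Measure.integral_compProd hint
    _ = ∫ ω, ∫ z, Φ (W' ω, z) ∂κ'' (W' ω) ∂P :=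
        integral_map hW'.aemeasurable hinner_sm.aestronglyMeasurable
    _ = ∫ ω, ∫ z, Φ (((ε ω, η ω), X ω), z) ∂(condDistrib Z X P (X ω)) ∂P := rfl

/-- **Theorem 2 (combined).** In the nonseparable triangular model `D = q(Z,X,η)` with
`e ↦ q(z,x,e)` strictly increasing and continuous, `η` continuously distributed with CDF `Fη`
continuous and strictly increasing on its support, `η ⫫ (Z,X)`, and `Z ⫫ (ε,η) | X`, the
constructed control variable `V := F_{D|Z,X}(D)` satisfies `V = Fη(η)` `P`-a.s. and `D` is
conditionally independent of `ε` given `(X,V)`. -/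
theorem triangular_control_variable_condIndep
    {Ω : Type*} {mΩ : MeasurableSpace Ω} (P : Measure Ω) [IsProbabilityMeasure P]
    {m k : ℕ}
    (Z : Ω → (Fin m → ℝ)) (X : Ω → (Fin k → ℝ)) (ε η : Ω → ℝ)
    (hZ : Measurable Z) (hX : Measurable X) (hε : Measurable ε) (hη : Measurable η)
    (q : (Fin m → ℝ) → (Fin k → ℝ) → ℝ → ℝ)
    (hq : Measurable fun p : (Fin m → ℝ) × (Fin k → ℝ) × ℝ => q p.1 p.2.1 p.2.2)
    (hqcont : ∀ z x, Continuous (q z x)) (hqmono : ∀ z x, StrictMono (q z x))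
    (D : Ω → ℝ) (hD : ∀ ω, D ω = q (Z ω) (X ω) (η ω))
    (hηcont : P.map η ≪ MeasureTheory.volume)
    (Fη : ℝ → ℝ) (hFη : ∀ e, Fη e = (P.map η (Set.Iic e)).toReal)
    (hFηcont : Continuous Fη)
    (hFηmono : StrictMonoOn Fη (measureSupport (P.map η)))
    (hindep : IndepFun η (fun ω => (Z ω, X ω)) P)
    -- instrument exogeneity: `Z ⫫ (ε,η) | X`
    (hexog : ∀ (f : (Fin m → ℝ) → ℝ) (g : ℝ × ℝ → ℝ), Measurable f → Measurable g →
      (∃ C, ∀ x, |f x| ≤ C) → (∃ C, ∀ x, |g x| ≤ C) →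
      P[fun ω => f (Z ω) * g (ε ω, η ω) | MeasurableSpace.comap X inferInstance]
        =ᵐ[P] fun ω => (P[fun ω' => f (Z ω') | MeasurableSpace.comap X inferInstance]) ω *
          (P[fun ω' => g (ε ω', η ω') | MeasurableSpace.comap X inferInstance]) ω)
    -- the control variable `V = F_{D|Z,X}(D)`
    (V : Ω → ℝ)
    (hV : ∀ ω, V ω
      = (condDistrib D (fun ω' => (Z ω', X ω')) P (Z ω, X ω) (Set.Iic (D ω))).toReal) :
    ((fun ω => V ω) =ᵐ[P] fun ω => Fη (η ω)) ∧
    (∀ (a b : ℝ → ℝ), Measurable a → Measurable b →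
      (∃ C, ∀ x, |a x| ≤ C) → (∃ C, ∀ x, |b x| ≤ C) →
      P[fun ω => a (D ω) * b (ε ω) |
          MeasurableSpace.comap (fun ω => (X ω, V ω)) inferInstance]
        =ᵐ[P] fun ω =>
          (P[fun ω' => a (D ω') |
              MeasurableSpace.comap (fun ω => (X ω, V ω)) inferInstance]) ω *
          (P[fun ω' => b (ε ω') |
              MeasurableSpace.comap (fun ω => (X ω, V ω)) inferInstance]) ω) := by
  classical
  have hqm : ∀ z x, Measurable (q z x) := fun z x =>
    hq.comp (measurable_const.prodMk (measurable_const.prodMk measurable_id))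
  have hDmeas : Measurable D := by
    have : D = fun ω => q (Z ω) (X ω) (η ω) := funext hD
    rw [this]
    exact hq.comp (hZ.prodMk (hX.prodMk hη))
  have hW : Measurable (fun ω => (Z ω, X ω)) := hZ.prodMk hX
  -- V is measurable
  have hVmeas : Measurable V := by
    set κV : Kernel ((((Fin m → ℝ) × (Fin k → ℝ)) × ℝ)) ℝ :=
      (condDistrib D (fun ω' => (Z ω', X ω')) P).comap Prod.fst measurable_fst with hκV
    have ht : MeasurableSet {p : ((((Fin m → ℝ) × (Fin k → ℝ)) × ℝ)) × ℝ | p.2 ≤ p.1.2} :=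
      measurableSet_le measurable_snd measurable_fst.snd
    have hmeas := Kernel.measurable_kernel_prodMk_left (κ := κV) ht
    have hVeq : V = fun ω =>
        (κV ((Z ω, X ω), D ω)
          (Prod.mk ((Z ω, X ω), D ω) ⁻¹' {p : ((((Fin m → ℝ) × (Fin k → ℝ)) × ℝ)) × ℝ |
            p.2 ≤ p.1.2})).toReal := by
      funext ω
      rw [hV ω]
      rfl
    rw [hVeq]
    exact hmeas.ennreal_toReal.comp (hW.prodMk hDmeas)
  -- Part (i)
  have hVae : (fun ω => V ω) =ᵐ[P] fun ω => Fη (η ω) :=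
    partA P Z X η hZ hX hη q hq hqmono D hD Fη hFη hindep V hV
  -- recovering η from V
  obtain ⟨Q, hQmeas, hQspec⟩ := exists_Q (P.map η) Fη hFηcont hFηmono
  have hηS : ∀ᵐ ω ∂P, η ω ∈ measureSupport (P.map η) := by
    refine ae_of_ae_map hη.aemeasurable ?_
    rw [ae_iff]
    exact measureSupport_compl_null (P.map η)
  have hQV : ∀ᵐ ω ∂P, Q (V ω) = η ω := by
    filter_upwards [hVae, hηS] with ω h1 h2
    rw [h1]
    exact hQspec _ h2
  refine ⟨hVae, ?_⟩
  intro a b ha hb hCa' hCb'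
  obtain ⟨Ca, hCa⟩ := hCa'
  obtain ⟨Cb, hCb⟩ := hCb'
  have hCa0 : 0 ≤ Ca := le_trans (abs_nonneg _) (hCa 0)
  have hCb0 : 0 ≤ Cb := le_trans (abs_nonneg _) (hCb 0)
  set T : Ω → (Fin k → ℝ) × ℝ := fun ω => (X ω, V ω) with hTdef
  have hT : Measurable T := hX.prodMk hVmeas
  have h𝓖 : MeasurableSpace.comap T inferInstance ≤ mΩ := hT.comap_le
  haveI : SigmaFinite (P.trim h𝓖) := by
    have : IsFiniteMeasure (P.trim h𝓖) := isFiniteMeasure_trim h𝓖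
    infer_instance
  -- the averaged structural function ψ and the Doob-factor u₀
  set κ : Kernel (Fin k → ℝ) (Fin m → ℝ) := condDistrib Z X P with hκdef
  set κψ : Kernel ((Fin k → ℝ) × ℝ) (Fin m → ℝ) :=
    κ.comap (Prod.fst : (Fin k → ℝ) × ℝ → Fin k → ℝ) measurable_fst with hκψdef
  set ψ : (Fin k → ℝ) × ℝ → ℝ := fun xh => ∫ z, a (q z xh.1 xh.2) ∂(κψ xh) with hψdef
  have hψsm : StronglyMeasurable ψ := by
    refine StronglyMeasurable.integral_kernel_prod_right' (κ := κψ)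
      (f := fun p : ((Fin k → ℝ) × ℝ) × (Fin m → ℝ) => a (q p.2 p.1.1 p.1.2)) ?_
    exact (ha.comp (hq.comp (measurable_snd.prodMk
      ((measurable_fst.fst).prodMk measurable_fst.snd)))).stronglyMeasurable
  have hψbdd : ∀ xh, |ψ xh| ≤ Ca := by
    intro xh
    haveI : IsProbabilityMeasure (κψ xh) := IsMarkovKernel.isProbabilityMeasure _
    have h := norm_integral_le_of_norm_le_const (μ := κψ xh)
      (f := fun z => a (q z xh.1 xh.2)) (C := Ca)
      (Filter.Eventually.of_forall fun z => by simpa [Real.norm_eq_abs] using hCa _)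
    simpa [Real.norm_eq_abs, measure_univ] using h
  set u₀ : (Fin k → ℝ) × ℝ → ℝ := fun w => ψ (w.1, Q w.2) with hu₀def
  have hu₀meas : Measurable u₀ :=
    hψsm.measurable.comp (measurable_fst.prodMk (hQmeas.comp measurable_snd))
  have hu₀bdd : ∀ w, |u₀ w| ≤ Ca := fun w => hψbdd _
  -- the key integral identity
  have key : ∀ B : Set ((Fin k → ℝ) × ℝ), MeasurableSet B → ∀ b' : ℝ → ℝ, Measurable b' →
      ∀ Cb' : ℝ, (∀ x, |b' x| ≤ Cb') →
      ∫ ω, B.indicator (fun _ => (1:ℝ)) (T ω) * (a (D ω) * b' (ε ω)) ∂P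
        = ∫ ω, B.indicator (fun _ => (1:ℝ)) (T ω) * (u₀ (T ω) * b' (ε ω)) ∂P := by
    intro B hB b' hb' Cb' hCb'
    have hCb'0 : 0 ≤ Cb' := le_trans (abs_nonneg _) (hCb' 0)
    set Φ : (((ℝ × ℝ) × (Fin k → ℝ)) × (Fin m → ℝ)) → ℝ := fun p =>
      B.indicator (fun _ => (1:ℝ)) (p.1.2, Fη p.1.1.2) * b' p.1.1.1
        * a (q p.2 p.1.2 p.1.1.2) with hΦdef
    have hΦmeas : Measurable Φ := by
      refine Measurable.mul (Measurable.mul ?_ ?_) ?_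
      · exact (measurable_const.indicator hB).comp
          ((measurable_fst.snd).prodMk (hFηcont.measurable.comp
            measurable_fst.fst.snd))
      · exact hb'.comp measurable_fst.fst.fst
      · exact ha.comp (hq.comp (measurable_snd.prodMk
          ((measurable_fst.snd).prodMk measurable_fst.fst.snd)))
    have hΦbdd : ∀ p, |Φ p| ≤ 1 * Cb' * Ca := by
      intro p
      rw [hΦdef]
      have hind : |B.indicator (fun _ => (1:ℝ)) (p.1.2, Fη p.1.1.2)| ≤ 1 := by
        unfold Set.indicator; split <;> simp
      calc |B.indicator (fun _ => (1:ℝ)) (p.1.2, Fη p.1.1.2) * b' p.1.1.1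
            * a (q p.2 p.1.2 p.1.1.2)|
          = |B.indicator (fun _ => (1:ℝ)) (p.1.2, Fη p.1.1.2) * b' p.1.1.1|
            * |a (q p.2 p.1.2 p.1.1.2)| := abs_mul _ _
        _ ≤ (1 * Cb') * Ca := by
            refine mul_le_mul ?_ (hCa _) (abs_nonneg _) (by positivity)
            rw [abs_mul]
            exact mul_le_mul hind (hCb' _) (abs_nonneg _) zero_le_one
    have hKF := KF P Z X ε η hZ hX hε hη hexog Φ hΦmeas hΦbdd
    have hL : ∫ ω, B.indicator (fun _ => (1:ℝ)) (T ω) * (a (D ω) * b' (ε ω)) ∂P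
        = ∫ ω, Φ (((ε ω, η ω), X ω), Z ω) ∂P := by
      refine integral_congr_ae ?_
      filter_upwards [hVae] with ω h1
      simp only [hΦdef, hTdef]
      rw [h1, hD ω]
      ring
    have hR : ∫ ω, ∫ z, Φ (((ε ω, η ω), X ω), z) ∂(condDistrib Z X P (X ω)) ∂P
        = ∫ ω, B.indicator (fun _ => (1:ℝ)) (T ω) * (u₀ (T ω) * b' (ε ω)) ∂P := by
      refine integral_congr_ae ?_
      filter_upwards [hVae, hQV] with ω h1 h2
      have hinner : ∫ z, Φ (((ε ω, η ω), X ω), z) ∂(condDistrib Z X P (X ω))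
          = (B.indicator (fun _ => (1:ℝ)) (X ω, Fη (η ω)) * b' (ε ω)) * ψ (X ω, η ω) := by
        simp only [hΦdef]
        rw [← integral_const_mul]
        rfl
      have hu₀T : u₀ (T ω) = ψ (X ω, η ω) := by
        simp only [hu₀def, hTdef]
        rw [h2]
      show ∫ z, Φ (((ε ω, η ω), X ω), z) ∂(condDistrib Z X P (X ω))
          = B.indicator (fun _ => (1:ℝ)) (T ω) * (u₀ (T ω) * b' (ε ω))
      rw [hinner, hu₀T]
      simp only [hTdef]
      rw [h1]
      ring
    rw [hL, hKF, hR]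
  -- indicator rewriting helper
  have hindi : ∀ (B : Set ((Fin k → ℝ) × ℝ)) (g : Ω → ℝ) (ω : Ω),
      (T ⁻¹' B).indicator g ω = B.indicator (fun _ => (1:ℝ)) (T ω) * g ω := by
    intro B g ω
    by_cases h : T ω ∈ B
    · rw [Set.indicator_of_mem (by exact h), Set.indicator_of_mem h, one_mul]
    · rw [Set.indicator_of_notMem (by exact h), Set.indicator_of_notMem h, zero_mul]
  have haD_int : Integrable (fun ω => a (D ω)) P :=
    integrable_of_bdd (ha.comp hDmeas).aestronglyMeasurable (fun ω => hCa _)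
  have hbε_int : Integrable (fun ω => b (ε ω)) P :=
    integrable_of_bdd (hb.comp hε).aestronglyMeasurable (fun ω => hCb _)
  -- claim 1 : u₀ ∘ T is a version of E[a(D) | (MeasurableSpace.comap T inferInstance)]
  have claim1 : (fun ω => u₀ (T ω)) =ᵐ[P] P[fun ω => a (D ω)|(MeasurableSpace.comap T inferInstance)] := by
    refine ae_eq_condExp_of_forall_setIntegral_eq h𝓖 haD_int ?_ ?_ ?_
    · intro s _ _
      exact (integrable_of_bdd (hu₀meas.comp hT).aestronglyMeasurable
        (fun ω => hu₀bdd _)).integrableOn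
    · rintro _ ⟨B, hB, rfl⟩ _
      calc ∫ x in T ⁻¹' B, u₀ (T x) ∂P
          = ∫ x, (T ⁻¹' B).indicator (fun x => u₀ (T x)) x ∂P :=
            (integral_indicator (hT hB)).symm
        _ = ∫ x, B.indicator (fun _ => (1:ℝ)) (T x) * (u₀ (T x) * 1) ∂P := by
            refine integral_congr_ae (Filter.Eventually.of_forall fun x => ?_)
            rw [hindi B _ x]; ring
        _ = ∫ x, B.indicator (fun _ => (1:ℝ)) (T x) * (a (D x) * 1) ∂P :=
            (key B hB (fun _ => 1) measurable_const 1 (by simp)).symm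
        _ = ∫ x, (T ⁻¹' B).indicator (fun x => a (D x)) x ∂P := by
            refine integral_congr_ae (Filter.Eventually.of_forall fun x => ?_)
            rw [hindi B _ x]; ring
        _ = ∫ x in T ⁻¹' B, a (D x) ∂P := integral_indicator (hT hB)
    · exact ((hu₀meas.comp (comap_measurable T)).stronglyMeasurable).aestronglyMeasurable
  -- conclusion
  have hab_int : Integrable (fun ω => a (D ω) * b (ε ω)) P := by
    refine integrable_of_bdd ((ha.comp hDmeas).mul (hb.comp hε)).aestronglyMeasurable
      (C := Ca * Cb) (fun ω => ?_)
    rw [abs_mul]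
    exact mul_le_mul (hCa _) (hCb _) (abs_nonneg _) hCa0
  have hc_bdd : ∀ᵐ ω ∂P, |(P[fun ω' => b (ε ω')|(MeasurableSpace.comap T inferInstance)]) ω| ≤ (⟨Cb, hCb0⟩ : NNReal) :=
    ae_bdd_condExp_of_ae_bdd (Filter.Eventually.of_forall fun ω => by
      exact_mod_cast hCb (ε ω))
  refine (ae_eq_condExp_of_forall_setIntegral_eq h𝓖 hab_int ?_ ?_ ?_).symm
  · intro s _ _
    have h1 : Integrable (fun ω => (P[fun ω' => b (ε ω')|(MeasurableSpace.comap T inferInstance)]) ω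
        * (P[fun ω' => a (D ω')|(MeasurableSpace.comap T inferInstance)]) ω) P := by
      refine Integrable.bdd_mul (c := Cb) integrable_condExp
        (stronglyMeasurable_condExp.mono h𝓖).aestronglyMeasurable ?_
      filter_upwards [hc_bdd] with ω hω
      simpa [Real.norm_eq_abs] using hω
    exact (h1.congr (Filter.Eventually.of_forall fun ω => mul_comm _ _)).integrableOn
  · rintro _ ⟨B, hB, rfl⟩ _
    have hu_sm : StronglyMeasurable[(MeasurableSpace.comap T inferInstance)]
        (fun x => B.indicator (fun _ => (1:ℝ)) (T x) * u₀ (T x)) := by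
      refine Measurable.stronglyMeasurable ?_
      exact ((measurable_const.indicator hB).comp (comap_measurable T)).mul
        (hu₀meas.comp (comap_measurable T))
    have hu_bdd : ∀ x, |B.indicator (fun _ => (1:ℝ)) (T x) * u₀ (T x)| ≤ Ca := by
      intro x
      rw [abs_mul]
      have hind : |B.indicator (fun _ => (1:ℝ)) (T x)| ≤ 1 := by
        unfold Set.indicator; split <;> simp
      calc |B.indicator (fun _ => (1:ℝ)) (T x)| * |u₀ (T x)| ≤ 1 * Ca :=
          mul_le_mul hind (hu₀bdd _) (abs_nonneg _) zero_le_one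
      _ = Ca := one_mul Ca
    calc ∫ x in T ⁻¹' B,
          (P[fun ω' => a (D ω')|(MeasurableSpace.comap T inferInstance)]) x * (P[fun ω' => b (ε ω')|(MeasurableSpace.comap T inferInstance)]) x ∂P
        = ∫ x, (T ⁻¹' B).indicator
            (fun x => (P[fun ω' => a (D ω')|(MeasurableSpace.comap T inferInstance)]) x * (P[fun ω' => b (ε ω')|(MeasurableSpace.comap T inferInstance)]) x) x ∂P :=
          (integral_indicator (hT hB)).symm
      _ = ∫ x, (B.indicator (fun _ => (1:ℝ)) (T x) * u₀ (T x))
            * (P[fun ω' => b (ε ω')|(MeasurableSpace.comap T inferInstance)]) x ∂P := by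
          refine integral_congr_ae ?_
          filter_upwards [claim1] with x hx
          rw [hindi B _ x, ← hx, mul_assoc]
      _ = ∫ x, (B.indicator (fun _ => (1:ℝ)) (T x) * u₀ (T x)) * b (ε x) ∂P :=
          integral_mul_condexp P h𝓖 hu_sm hu_bdd hbε_int
      _ = ∫ x, B.indicator (fun _ => (1:ℝ)) (T x) * (u₀ (T x) * b (ε x)) ∂P := by
          refine integral_congr_ae (Filter.Eventually.of_forall fun x => ?_)
          ring
      _ = ∫ x, B.indicator (fun _ => (1:ℝ)) (T x) * (a (D x) * b (ε x)) ∂P :=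
          (key B hB b hb Cb hCb).symm
      _ = ∫ x, (T ⁻¹' B).indicator (fun x => a (D x) * b (ε x)) x ∂P := by
          refine integral_congr_ae (Filter.Eventually.of_forall fun x => ?_)
          rw [hindi B _ x]
      _ = ∫ x in T ⁻¹' B, a (D x) * b (ε x) ∂P := integral_indicator (hT hB)
  · exact (stronglyMeasurable_condExp.mul stronglyMeasurable_condExp).aestronglyMeasurable
end
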